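/- arXiv:1210.7618 — 4 statements merged into one kernel-verified Lean document; each statement's English description precedes it below -/
import Mathlib

section
/- Let X be a finite set and F ⊆ 2^X a family of winning sets. In the (a,b) Maker-Breaker game on (X,F), if Σ_{F∈F} (1+b)^{-|F|/a} < 1/(1+b), then Breaker (moving first or second) has a winning strategy. -/
set_option linter.unusedSectionVars false
set_option maxHeartbeats 1000000


open Finset

variable {α : Type*} [Fintype α] [DecidableEq α]

/-- `breakerWinsAux F a b fuel t M B` : in the `(a,b)` Maker-Breaker game on the
(finite) board `α` with family of winning sets `F`, from the position where Maker has
claimed `M` and Breaker has claimed `B`, the player to move being Breaker if `t = true`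
and Maker if `t = false`, Breaker can force that by the time all board elements are
claimed, Maker has not fully claimed any winning set.  In each turn the player to move
claims exactly his bias many previously unclaimed elements (or all remaining elements
if fewer remain).  The `fuel` parameter bounds the number of remaining turns; since
each turn from a position with free elements claims at least one element (for positive
biases), `fuel = |α| + 1` captures the full game. -/
def breakerWinsAux (F : Finset (Finset α)) (a b : ℕ) :
    ℕ → Bool → Finset α → Finset α → Prop
  | 0, _, M, _ => ¬ ∃ W ∈ F, W ⊆ M
  | fuel + 1, t, M, B =>
      let free := Finset.univ \ (M ∪ B)
      if free.Nonempty then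
        if t then
          ∃ S ⊆ free, S.card = min b free.card ∧
            breakerWinsAux F a b fuel false M (B ∪ S)
        else
          ∀ S ⊆ free, S.card = min a free.card →
            breakerWinsAux F a b fuel true (M ∪ S) B
      else ¬ ∃ W ∈ F, W ⊆ M

/-- Breaker has a winning strategy in the `(a,b)` game `(α, F)`, moving first
(`t = true`) or second (`t = false`). -/
def BreakerWins (F : Finset (Finset α)) (a b : ℕ) (t : Bool) : Prop :=
  breakerWinsAux F a b (Fintype.card α + 1) t ∅ ∅


section Beck

variable (F : Finset (Finset α)) (a b : ℕ)

/-- weight of a winning set `W` given Maker's holdings `M`. -/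
noncomputable def bwt (M W : Finset α) : ℝ :=
  (1 + (b : ℝ)) ^ (-(((W \ M).card : ℝ) / a))

/-- total potential: sum of weights of winning sets not hit by Breaker. -/
noncomputable def bpot (M B : Finset α) : ℝ :=
  ∑ W ∈ F.filter (fun W => Disjoint W B), bwt a b M W

/-- danger of a point `x`: total weight of alive winning sets containing `x`. -/
noncomputable def bdng (M B : Finset α) (x : α) : ℝ :=
  ∑ W ∈ F.filter (fun W => Disjoint W B ∧ x ∈ W), bwt a b M W

variable {F a b}

lemma one_lt_base (hb : 0 < b) : (1 : ℝ) < 1 + (b : ℝ) := by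
  have : (1 : ℝ) ≤ (b : ℝ) := by exact_mod_cast hb
  linarith

lemma bwt_pos (hb : 0 < b) (M W : Finset α) : 0 < bwt a b M W :=
  Real.rpow_pos_of_pos (by positivity) _

lemma bpot_nonneg (hb : 0 < b) (M B : Finset α) : 0 ≤ bpot F a b M B :=
  Finset.sum_nonneg fun W _ => (bwt_pos hb M W).le

lemma bdng_nonneg (hb : 0 < b) (M B : Finset α) (x : α) : 0 ≤ bdng F a b M B x :=
  Finset.sum_nonneg fun W _ => (bwt_pos hb M W).le

/-- splitting the potential when Breaker claims a point. -/
lemma bpot_insert (M B : Finset α) (y : α) :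
    bpot F a b M B = bpot F a b M (insert y B) + bdng F a b M B y := by
  have h1 : F.filter (fun W => Disjoint W (insert y B)) =
      (F.filter (fun W => Disjoint W B)).filter (fun W => y ∉ W) := by
    ext W
    simp only [Finset.mem_filter, Finset.disjoint_insert_right]
    tauto
  have h2 : F.filter (fun W => Disjoint W B ∧ y ∈ W) =
      (F.filter (fun W => Disjoint W B)).filter (fun W => y ∈ W) := by
    rw [Finset.filter_filter]
  rw [bpot, bpot, bdng, h1, h2]
  rw [add_comm]
  exact (Finset.sum_filter_add_sum_filter_not _ _ _).symm

/-- danger is antitone in Breaker's holdings. -/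
lemma bdng_anti (hb : 0 < b) (M : Finset α) {B B' : Finset α} (hBB : B ⊆ B') (x : α) :
    bdng F a b M B' x ≤ bdng F a b M B x := by
  apply Finset.sum_le_sum_of_subset_of_nonneg
  · intro W hW
    rw [Finset.mem_filter] at hW ⊢
    exact ⟨hW.1, hW.2.1.mono_right hBB, hW.2.2⟩
  · exact fun W _ _ => (bwt_pos hb M W).le

/-- a claimed winning set contributes 1 to the potential. -/
lemma no_win_of_bpot_lt_one (hb : 0 < b) {M B : Finset α} (hMB : Disjoint M B)
    (hpot : bpot F a b M B < 1) : ¬ ∃ W ∈ F, W ⊆ M := by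
  rintro ⟨W, hWF, hWM⟩
  have hWB : Disjoint W B := hMB.mono_left hWM
  have hmem : W ∈ F.filter (fun W => Disjoint W B) := Finset.mem_filter.2 ⟨hWF, hWB⟩
  have hwt : bwt a b M W = 1 := by
    rw [bwt, Finset.sdiff_eq_empty_iff_subset.2 hWM]
    simp
  have := Finset.single_le_sum (f := fun W => bwt a b M W)
    (fun W _ => (bwt_pos hb M W).le) hmem
  simp only [hwt] at this
  exact absurd (lt_of_le_of_lt this hpot) (lt_irrefl _)

end Beck

section Beck2

variable {F : Finset (Finset α)} {a b : ℕ}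

lemma bdng_le_bpot (hb : 0 < b) (M B : Finset α) (x : α) :
    bdng F a b M B x ≤ bpot F a b M B := by
  apply Finset.sum_le_sum_of_subset_of_nonneg
  · intro W hW
    rw [Finset.mem_filter] at hW ⊢
    exact ⟨hW.1, hW.2.1⟩
  · exact fun W _ _ => (bwt_pos hb M W).le

/-- Maker's move increases the potential by at most `(b/a)` times the total danger. -/
lemma maker_bound (ha : 0 < a) (hb : 0 < b) {M B S : Finset α}
    (hS : S ⊆ Finset.univ \ (M ∪ B)) (hcard : S.card ≤ a) :
    bpot F a b (M ∪ S) B ≤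
      bpot F a b M B + ((b : ℝ)/a) * ∑ x ∈ S, bdng F a b M B x := by
  have ha' : (0:ℝ) < a := by exact_mod_cast ha
  have hSM : ∀ x ∈ S, x ∉ M := by
    intro x hx
    have := hS hx
    rw [Finset.mem_sdiff, Finset.mem_union] at this
    tauto
  have key : ∀ W ∈ F.filter (fun W => Disjoint W B),
      bwt a b (M ∪ S) W ≤ bwt a b M W + ((b:ℝ)/a) * (bwt a b M W * ((W ∩ S).card : ℝ)) := by
    intro W _
    have hWS : W \ (M ∪ S) = (W \ M) \ S := by
      ext x
      simp only [Finset.mem_sdiff, Finset.mem_union]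
      tauto
    have hinter : (W \ M) ∩ S = W ∩ S := by
      ext x
      simp only [Finset.mem_inter, Finset.mem_sdiff]
      exact ⟨fun h => ⟨h.1.1, h.2⟩, fun h => ⟨⟨h.1, hSM x h.2⟩, h.2⟩⟩
    set n := (W \ M).card with hn
    set k := (W ∩ S).card with hk
    have hkn : k ≤ n := by
      rw [hk, ← hinter]
      exact Finset.card_le_card Finset.inter_subset_left
    have hka : k ≤ a := le_trans (Finset.card_le_card Finset.inter_subset_right) hcard
    have hcardeq : ((W \ (M ∪ S)).card : ℝ) = (n : ℝ) - k := by
      rw [hWS]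
      have h1 : ((W \ M) \ S).card + ((W \ M) ∩ S).card = n := Finset.card_sdiff_add_card_inter _ _
      rw [hinter, ← hk] at h1
      have h2 : ((W \ M) \ S).card = n - k := by omega
      rw [h2, Nat.cast_sub hkn]
    have hbase : (0:ℝ) < 1 + b := by positivity
    have expand : bwt a b (M ∪ S) W = bwt a b M W * (1 + (b:ℝ)) ^ ((k:ℝ)/a) := by
      rw [bwt, bwt, hcardeq, ← Real.rpow_add hbase, ← hn]
      ring_nf
    set t : ℝ := (k:ℝ)/a with htdef
    have ht0 : 0 ≤ t := by positivity
    have ht1 : t ≤ 1 := by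
      rw [htdef, div_le_one ha']
      exact_mod_cast hka
    have bern : (1 + (b:ℝ)) ^ t ≤ 1 + t * b := by
      have hg := Real.geom_mean_le_arith_mean2_weighted (w₁ := 1 - t) (w₂ := t)
        (p₁ := 1) (p₂ := 1 + (b:ℝ)) (by linarith) ht0 zero_le_one (by positivity) (by ring)
      rw [Real.one_rpow] at hg
      nlinarith
    rw [expand]
    have hw0 : 0 ≤ bwt a b M W := (bwt_pos hb M W).le
    calc bwt a b M W * (1 + (b:ℝ)) ^ t ≤ bwt a b M W * (1 + t * b) :=
          mul_le_mul_of_nonneg_left bern hw0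
      _ = bwt a b M W + ((b:ℝ)/a) * (bwt a b M W * k) := by
          rw [htdef]; field_simp
  have hsum : ∑ x ∈ S, bdng F a b M B x
      = ∑ W ∈ F.filter (fun W => Disjoint W B), bwt a b M W * ((W ∩ S).card : ℝ) := by
    have hrw : ∀ x, bdng F a b M B x = ∑ W ∈ F.filter (fun W => Disjoint W B),
        (if x ∈ W then bwt a b M W else 0) := by
      intro x
      rw [bdng, ← Finset.sum_filter, Finset.filter_filter]
    simp_rw [hrw]
    rw [Finset.sum_comm]
    apply Finset.sum_congr rfl
    intro W _
    calc ∑ x ∈ S, (if x ∈ W then bwt a b M W else 0)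
        = ∑ x ∈ S.filter (fun x => x ∈ W), bwt a b M W := (Finset.sum_filter _ _).symm
      _ = (S.filter (fun x => x ∈ W)).card • bwt a b M W := Finset.sum_const _
      _ = bwt a b M W * ((W ∩ S).card : ℝ) := by
          rw [Finset.filter_mem_eq_inter, Finset.inter_comm, nsmul_eq_mul, mul_comm]
  rw [bpot, bpot, hsum, Finset.mul_sum, ← Finset.sum_add_distrib]
  exact Finset.sum_le_sum key

/-- Breaker's greedy move. -/
lemma breaker_greedy (hb : 0 < b) (M B : Finset α) :
    ∀ j, j ≤ (Finset.univ \ (M ∪ B)).card →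
    ∃ S ⊆ Finset.univ \ (M ∪ B), S.card = j ∧
      bpot F a b M (B ∪ S) ≤ bpot F a b M B ∧
      ∀ x ∈ Finset.univ \ (M ∪ (B ∪ S)),
        bpot F a b M (B ∪ S) + (j:ℝ) * bdng F a b M (B ∪ S) x ≤ bpot F a b M B := by
  intro j
  induction j with
  | zero =>
    intro _
    exact ⟨∅, Finset.empty_subset _, Finset.card_empty, by simp, by simp⟩
  | succ j ih =>
    intro hj
    obtain ⟨S, hSsub, hScard, hSpot, hSall⟩ := ih (Nat.le_of_succ_le hj)
    have hsub2 : Finset.univ \ (M ∪ (B ∪ S)) = (Finset.univ \ (M ∪ B)) \ S := by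
      ext x
      simp only [Finset.mem_sdiff, Finset.mem_union, Finset.mem_univ, true_and]
      tauto
    have hfree : (Finset.univ \ (M ∪ (B ∪ S))).Nonempty := by
      rw [hsub2, ← Finset.card_pos, Finset.card_sdiff_of_subset hSsub, hScard]
      omega
    obtain ⟨y, hy, hymax⟩ := Finset.exists_max_image _ (bdng F a b M (B ∪ S)) hfree
    have hy' := hy
    rw [Finset.mem_sdiff, Finset.mem_union, Finset.mem_union] at hy'
    have hyS : y ∉ S := fun h => hy'.2 (Or.inr (Or.inr h))
    have hyfree0 : y ∈ Finset.univ \ (M ∪ B) := by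
      rw [Finset.mem_sdiff, Finset.mem_union]
      exact ⟨Finset.mem_univ _, fun h => hy'.2 (h.imp id Or.inl)⟩
    have hBins : B ∪ insert y S = insert y (B ∪ S) := by
      ext x
      simp only [Finset.mem_union, Finset.mem_insert]
      tauto
    have hsplit := bpot_insert (F := F) (a := a) (b := b) M (B ∪ S) y
    have hdy : 0 ≤ bdng F a b M (B ∪ S) y := bdng_nonneg hb M (B ∪ S) y
    refine ⟨insert y S, ?_, ?_, ?_, ?_⟩
    · intro x hx
      rcases Finset.mem_insert.1 hx with rfl | hx
      · exact hyfree0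
      · exact hSsub hx
    · rw [Finset.card_insert_of_notMem hyS, hScard]
    · rw [hBins]
      linarith
    · intro x hx
      rw [hBins] at hx ⊢
      have hxj : x ∈ Finset.univ \ (M ∪ (B ∪ S)) := by
        simp only [Finset.mem_sdiff, Finset.mem_union, Finset.mem_insert, Finset.mem_univ,
          true_and] at hx ⊢
        tauto
      have h1 : bdng F a b M (insert y (B ∪ S)) x ≤ bdng F a b M (B ∪ S) x :=
        bdng_anti hb M (Finset.subset_insert _ _) x
      have h2 : bdng F a b M (B ∪ S) x ≤ bdng F a b M (B ∪ S) y := hymax x hxj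
      have hIH := hSall x hxj
      have hjm : (j:ℝ) * bdng F a b M (insert y (B ∪ S)) x
          ≤ (j:ℝ) * bdng F a b M (B ∪ S) x :=
        mul_le_mul_of_nonneg_left h1 (by positivity)
      have h3 : bdng F a b M (insert y (B ∪ S)) x ≤ bdng F a b M (B ∪ S) y :=
        le_trans h1 h2
      push_cast
      linarith

end Beck2


section Beck3

variable {F : Finset (Finset α)} {a b : ℕ}

lemma breaker_main (ha : 0 < a) (hb : 0 < b) :
    ∀ fuel (M B : Finset α), Disjoint M B →
      (bpot F a b M B < 1 → breakerWinsAux F a b fuel true M B) ∧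
      ((∃ c, 0 ≤ c ∧ bpot F a b M B + b * c < 1 ∧
          ∀ x ∈ Finset.univ \ (M ∪ B), bdng F a b M B x ≤ c) →
        breakerWinsAux F a b fuel false M B) := by
  intro fuel
  induction fuel with
  | zero =>
    intro M B hMB
    refine ⟨fun hpot => no_win_of_bpot_lt_one hb hMB hpot, ?_⟩
    rintro ⟨c, hc0, hc, -⟩
    apply no_win_of_bpot_lt_one hb hMB
    have hbc : 0 ≤ (b:ℝ) * c := by positivity
    linarith
  | succ fuel ih =>
    intro M B hMB
    constructor
    · intro hpot
      by_cases hne : (Finset.univ \ (M ∪ B)).Nonempty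
      · simp only [breakerWinsAux, hne, if_true]
        obtain ⟨S, hSsub, hScard, hSpot, hSall⟩ :=
          breaker_greedy (F := F) (a := a) hb M B (min b (Finset.univ \ (M ∪ B)).card)
            (min_le_right _ _)
        have hSdisj : Disjoint M (B ∪ S) := by
          rw [Finset.disjoint_union_right]
          refine ⟨hMB, ?_⟩
          rw [Finset.disjoint_right]
          intro x hx
          have := hSsub hx
          rw [Finset.mem_sdiff, Finset.mem_union] at this
          tauto
        refine ⟨S, hSsub, hScard, ?_⟩
        apply (ih M (B ∪ S) hSdisj).2
        by_cases hne2 : (Finset.univ \ (M ∪ (B ∪ S))).Nonempty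
        · have hjb : min b (Finset.univ \ (M ∪ B)).card = b := by
            rcases le_or_gt b (Finset.univ \ (M ∪ B)).card with hle | hlt
            · exact min_eq_left hle
            · exfalso
              have hSeq : S = Finset.univ \ (M ∪ B) := by
                apply Finset.eq_of_subset_of_card_le hSsub
                rw [hScard, min_eq_right hlt.le]
              obtain ⟨x, hx⟩ := hne2
              rw [Finset.mem_sdiff, Finset.mem_union] at hx
              have hxf : x ∈ Finset.univ \ (M ∪ B) := by
                rw [Finset.mem_sdiff, Finset.mem_union]
                refine ⟨Finset.mem_univ _, ?_⟩
                rw [Finset.mem_union] at hx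
                tauto
              rw [← hSeq] at hxf
              rw [Finset.mem_union] at hx
              exact hx.2 (Or.inr (Or.inr hxf))
          obtain ⟨x0, hx0, hx0max⟩ :=
            Finset.exists_max_image _ (bdng F a b M (B ∪ S)) hne2
          refine ⟨bdng F a b M (B ∪ S) x0, bdng_nonneg hb _ _ _, ?_,
            fun x hx => hx0max x hx⟩
          have hx0b := hSall x0 hx0
          rw [hjb] at hx0b
          exact lt_of_le_of_lt hx0b hpot
        · refine ⟨0, le_refl _, ?_, fun x hx => absurd ⟨x, hx⟩ hne2⟩
          rw [mul_zero, add_zero]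
          exact lt_of_le_of_lt hSpot hpot
      · simp only [breakerWinsAux, hne, if_false]
        exact no_win_of_bpot_lt_one hb hMB hpot
    · rintro ⟨c, hc0, hc, hcall⟩
      have hpot : bpot F a b M B < 1 := by
        have hbc : 0 ≤ (b:ℝ) * c := by positivity
        linarith
      by_cases hne : (Finset.univ \ (M ∪ B)).Nonempty
      · simp only [breakerWinsAux, hne, if_true]
        intro S hSsub hScard
        have hSdisj : Disjoint (M ∪ S) B := by
          rw [Finset.disjoint_union_left]
          refine ⟨hMB, ?_⟩
          rw [Finset.disjoint_left]
          intro x hx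
          have := hSsub hx
          rw [Finset.mem_sdiff, Finset.mem_union] at this
          tauto
        apply (ih (M ∪ S) B hSdisj).1
        have hSa : S.card ≤ a := by rw [hScard]; exact min_le_left _ _
        have hmb := maker_bound (F := F) ha hb hSsub hSa
        have hdsum : ∑ x ∈ S, bdng F a b M B x ≤ (S.card : ℝ) * c := by
          calc ∑ x ∈ S, bdng F a b M B x ≤ ∑ _x ∈ S, c :=
                Finset.sum_le_sum fun x hx => hcall x (hSsub hx)
            _ = (S.card : ℝ) * c := by rw [Finset.sum_const, nsmul_eq_mul]
        have ha' : (0:ℝ) < a := by exact_mod_cast ha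
        have hfrac : ((b:ℝ)/a) * ∑ x ∈ S, bdng F a b M B x ≤ (b:ℝ) * c := by
          have h1 : ((b:ℝ)/a) * ∑ x ∈ S, bdng F a b M B x
              ≤ ((b:ℝ)/a) * ((S.card : ℝ) * c) :=
            mul_le_mul_of_nonneg_left hdsum (by positivity)
          have hSa' : (S.card : ℝ) ≤ a := by exact_mod_cast hSa
          have hbc : 0 ≤ (b:ℝ) * c := by positivity
          have h2 : ((b:ℝ)/a) * ((S.card : ℝ) * c) ≤ (b:ℝ) * c := by
            rw [div_mul_eq_mul_div, div_le_iff₀ ha']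
            nlinarith [mul_le_mul_of_nonneg_left hSa' hbc]
          linarith
        linarith
      · simp only [breakerWinsAux, hne, if_false]
        exact no_win_of_bpot_lt_one hb hMB hpot

end Beck3

/-- Beck's criterion. If
`∑_{W ∈ F} (1+b)^{-|W|/a} < 1/(1+b)`, then Breaker, as a first or second player,
has a winning strategy in the `(a,b)` Maker-Breaker game `(α, F)`. -/
theorem breaker_criterion (F : Finset (Finset α)) (a b : ℕ) (ha : 0 < a) (hb : 0 < b)
    (h : ∑ W ∈ F, ((1 + b : ℝ)) ^ (-((W.card : ℝ) / a)) < 1 / (1 + b)) :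
    BreakerWins F a b true ∧ BreakerWins F a b false := by
  have hbase : (0:ℝ) < 1 + (b:ℝ) := by positivity
  have hb1 : (1:ℝ) < 1 + (b:ℝ) := by
    have : (1:ℝ) ≤ (b:ℝ) := by exact_mod_cast hb
    linarith
  have hpot0 : bpot F a b ∅ ∅ = ∑ W ∈ F, ((1 + b : ℝ)) ^ (-((W.card : ℝ) / a)) := by
    rw [bpot, Finset.filter_true_of_mem (fun W _ => Finset.disjoint_empty_right W)]
    apply Finset.sum_congr rfl
    intro W _
    rw [bwt, Finset.sdiff_empty]
  have hlt : bpot F a b ∅ ∅ < 1 / (1 + (b:ℝ)) := by rw [hpot0]; exact h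
  have hlt1 : bpot F a b ∅ ∅ < 1 := lt_trans hlt (by rw [div_lt_one hbase]; linarith)
  have hdisj : Disjoint (∅ : Finset α) (∅ : Finset α) := Finset.disjoint_empty_left _
  constructor
  · exact (breaker_main (F := F) ha hb _ ∅ ∅ hdisj).1 hlt1
  · apply (breaker_main (F := F) ha hb _ ∅ ∅ hdisj).2
    refine ⟨bpot F a b ∅ ∅, bpot_nonneg hb _ _, ?_, fun x _ => bdng_le_bpot hb _ _ x⟩
    have : (1 + (b:ℝ)) * bpot F a b ∅ ∅ < (1 + (b:ℝ)) * (1 / (1 + (b:ℝ))) :=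
      mul_lt_mul_of_pos_left hlt hbase
    rw [mul_one_div, div_self (ne_of_gt hbase)] at this
    linarith
end

section
/- Let p ≥ (ln n)/n. With probability tending to 1 as n → ∞, G ~ G(n,p) satisfies: for every subset U of vertices, the number of edges spanned by U satisfies e(U) ≤ max{3|U|·ln n, 3|U|²·p}. -/
open MeasureTheory Filter

/-- The Erdős–Rényi random graph measure `G(n,p)`: each potential edge (an element of
`Sym2 (Fin n)`) is present independently with probability `p`. -/
noncomputable def gnp (n : ℕ) (p : ENNReal) (hp : p ≤ 1) :
    Measure (Sym2 (Fin n) → Bool) :=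
  Measure.pi fun _ => (PMF.bernoulli p.toNNReal
    (by simpa using ENNReal.toNNReal_mono ENNReal.one_ne_top hp)).toMeasure

/-- The graph determined by an outcome `ω` of the edge indicators. -/
def graphOf {n : ℕ} (ω : Sym2 (Fin n) → Bool) : SimpleGraph (Fin n) :=
  SimpleGraph.fromEdgeSet {e | ω e = true}


/-- The number of edges of `G` spanned by the vertex set `U`. -/
noncomputable def edgesIn {V : Type*} (G : SimpleGraph V) (U : Set V) : ℕ :=
  {e ∈ G.edgeSet | ∀ x ∈ e, x ∈ U}.ncard

/-- the possible edge slots within a finite vertex set -/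
def slots (n : ℕ) (U : Finset (Fin n)) : Finset (Sym2 (Fin n)) :=
  Finset.univ.filter (fun e => ¬ e.IsDiag ∧ ∀ x ∈ e, x ∈ U)

lemma slots_eq_image (n : ℕ) (U : Finset (Fin n)) :
    slots n U = U.offDiag.image Sym2.mk.uncurry := by
  ext e
  induction e with
  | _ a b =>
    simp only [slots, Finset.mem_filter, Finset.mem_univ, true_and, Finset.mem_image,
      Finset.mem_offDiag, Sym2.isDiag_iff_proj_eq, Sym2.mem_iff]
    constructor
    · rintro ⟨hab, hmem⟩
      exact ⟨(a, b), ⟨hmem a (Or.inl rfl), hmem b (Or.inr rfl), hab⟩, rfl⟩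
    · rintro ⟨⟨x, y⟩, ⟨hx, hy, hxy⟩, hxyab⟩
      have : s(x, y) = s(a, b) := hxyab
      rw [Sym2.eq_iff] at this
      constructor
      · rintro rfl
        rcases this with ⟨rfl, rfl⟩ | ⟨rfl, rfl⟩ <;> exact hxy rfl
      · intro z hz
        rcases this with ⟨rfl, rfl⟩ | ⟨rfl, rfl⟩ <;> rcases hz with rfl | rfl <;> assumption

lemma two_mul_card_slots_le (n : ℕ) (U : Finset (Fin n)) :
    2 * (slots n U).card ≤ U.card ^ 2 := by
  rw [slots_eq_image]
  have h := Finset.mul_card_image_le_card (f := Sym2.mk.uncurry) U.offDiag 2 ?_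
  · calc 2 * (U.offDiag.image Sym2.mk.uncurry).card ≤ U.offDiag.card := h
    _ = U.card * U.card - U.card := Finset.offDiag_card U
    _ ≤ U.card ^ 2 := by rw [sq]; omega
  · intro e he
    rw [Finset.mem_image] at he
    obtain ⟨⟨a, b⟩, hab, rfl⟩ := he
    rw [Finset.mem_offDiag] at hab
    have hsub : ({(a, b), (b, a)} : Finset (Fin n × Fin n)) ⊆
        U.offDiag.filter (fun x => Sym2.mk.uncurry x = s(a, b)) := by
      intro x hx
      rcases Finset.mem_insert.1 hx with rfl | hx
      · exact Finset.mem_filter.2 ⟨Finset.mem_offDiag.2 hab, rfl⟩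
      · rw [Finset.mem_singleton] at hx; subst hx
        exact Finset.mem_filter.2 ⟨Finset.mem_offDiag.2 ⟨hab.2.1, hab.1, fun h => hab.2.2 h.symm⟩,
          Sym2.eq_swap⟩
    have hcard : ({(a, b), (b, a)} : Finset (Fin n × Fin n)).card = 2 := by
      rw [Finset.card_insert_of_notMem, Finset.card_singleton]
      simp only [Finset.mem_singleton, Prod.mk.injEq, not_and]
      intro h; exact absurd h hab.2.2
    calc 2 = ({(a, b), (b, a)} : Finset (Fin n × Fin n)).card := hcard.symm
    _ ≤ _ := Finset.card_le_card hsub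

lemma gnp_isProb (n : ℕ) (p : ENNReal) (hp : p ≤ 1) :
    IsProbabilityMeasure (gnp n p hp) := by
  unfold gnp; infer_instance

lemma gnp_cylinder (n : ℕ) (p : ENNReal) (hp : p ≤ 1) (S : Finset (Sym2 (Fin n))) :
    gnp n p hp {ω | ∀ e ∈ S, ω e = true} = p ^ S.card := by
  have hset : {ω : Sym2 (Fin n) → Bool | ∀ e ∈ S, ω e = true} =
      Set.pi Set.univ (fun e => if e ∈ S then {true} else Set.univ) := by
    ext ω
    simp only [Set.mem_setOf_eq, Set.mem_pi, Set.mem_univ, forall_true_left]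
    constructor
    · intro h e
      split_ifs with he
      · simpa using h e he
      · trivial
    · intro h e he
      have := h e
      rw [if_pos he] at this
      simpa using this
  rw [gnp, hset, Measure.pi_pi]
  have hb : ∀ e : Sym2 (Fin n),
      (PMF.bernoulli p.toNNReal
        (by simpa using ENNReal.toNNReal_mono ENNReal.one_ne_top hp)).toMeasure (if e ∈ S then {true} else Set.univ)
        = if e ∈ S then p else 1 := by
    intro e
    split_ifs with he
    · rw [PMF.toMeasure_apply_singleton _ _ (measurableSet_singleton _)]
      exact (PMF.bernoulli_apply _ true).trans (ENNReal.coe_toNNReal (ne_top_of_le_ne_top ENNReal.one_ne_top hp))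
    · simp only [measure_univ]
  simp_rw [hb]
  rw [Finset.prod_ite_mem, Finset.univ_inter, Finset.prod_const]

lemma edgesIn_eq (n : ℕ) (ω : Sym2 (Fin n) → Bool) (U : Finset (Fin n)) :
    edgesIn (graphOf ω) ↑U = ((slots n U).filter (fun e => ω e = true)).card := by
  rw [edgesIn]
  have hset : {e ∈ (graphOf ω).edgeSet | ∀ x ∈ e, x ∈ (↑U : Set (Fin n))} =
      ↑((slots n U).filter (fun e => ω e = true)) := by
    ext e
    simp only [graphOf, SimpleGraph.edgeSet_fromEdgeSet, Set.mem_setOf_eq, Set.mem_diff,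
      Finset.coe_filter, slots, Finset.mem_filter, Finset.mem_univ, true_and, Finset.mem_coe]
    tauto
  rw [hset, Set.ncard_coe_finset]

lemma gnp_tail (n : ℕ) (p : ENNReal) (hp : p ≤ 1) (U : Finset (Fin n)) (T : ℕ) :
    gnp n p hp {ω | T ≤ ((slots n U).filter (fun e => ω e = true)).card}
      ≤ ((slots n U).card.choose T : ENNReal) * p ^ T := by
  set m := slots n U with hm
  have hsub : {ω : Sym2 (Fin n) → Bool | T ≤ (m.filter fun e => ω e = true).card} ⊆
      ⋃ S ∈ m.powersetCard T, {ω : Sym2 (Fin n) → Bool | ∀ e ∈ S, ω e = true} := by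
    intro ω hω
    obtain ⟨S, hS1, hS2⟩ := Finset.exists_subset_card_eq hω
    refine Set.mem_iUnion₂.2 ⟨S, ?_, ?_⟩
    · exact Finset.mem_powersetCard.2 ⟨hS1.trans (Finset.filter_subset _ _), hS2⟩
    · intro e he
      exact (Finset.mem_filter.1 (hS1 he)).2
  calc gnp n p hp {ω | T ≤ (m.filter fun e => ω e = true).card}
      ≤ ∑ S ∈ m.powersetCard T, gnp n p hp {ω | ∀ e ∈ S, ω e = true} :=
        (measure_mono hsub).trans (measure_biUnion_finset_le _ _)
    _ = ∑ S ∈ m.powersetCard T, p ^ T := by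
        refine Finset.sum_congr rfl fun S hS => ?_
        rw [gnp_cylinder, (Finset.mem_powersetCard.1 hS).2]
    _ = ((m.card.choose T : ℕ) : ENNReal) * p ^ T := by
        rw [Finset.sum_const, Finset.card_powersetCard, nsmul_eq_mul]

lemma tail_real (m T k : ℕ) (q L : ℝ) (hq : 0 ≤ q) (hL : 0 ≤ L)
    (hm : 2 * m ≤ k ^ 2) (hT1 : 3 * (k : ℝ) ^ 2 * q ≤ T) (hT2 : 3 * k * L ≤ T) (hT0 : 0 < T) :
    (m.choose T : ℝ) * q ^ T ≤ Real.exp (-(2 * k * L)) := by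
  have hTpos : (0 : ℝ) < T := by exact_mod_cast hT0
  have hFpos : (0 : ℝ) < T.factorial := by exact_mod_cast T.factorial_pos
  have h1 : (m.choose T : ℝ) * T.factorial ≤ (m : ℝ) ^ T := by
    have : m.choose T * T.factorial ≤ m ^ T := by
      rw [mul_comm, ← Nat.descFactorial_eq_factorial_mul_choose]
      exact Nat.descFactorial_le_pow m T
    exact_mod_cast this
  have h2 : ((T : ℝ)) ^ T ≤ T.factorial * Real.exp T := by
    have hsum := Real.sum_le_exp_of_nonneg (le_of_lt hTpos) (T + 1)
    have hterm : (T : ℝ) ^ T / T.factorial ≤ Real.exp T :=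
      le_trans (Finset.single_le_sum (f := fun i => (T : ℝ) ^ i / i.factorial)
        (fun i _ => by positivity) (Finset.self_mem_range_succ T)) hsum
    calc (T : ℝ) ^ T = ((T : ℝ) ^ T / T.factorial) * T.factorial := by field_simp
    _ ≤ Real.exp T * T.factorial := mul_le_mul_of_nonneg_right hterm hFpos.le
    _ = T.factorial * Real.exp T := mul_comm _ _
  have hchain : (m.choose T : ℝ) * q ^ T ≤ (Real.exp 1 * m * q / T) ^ T := by
    have e1 : (m.choose T : ℝ) ≤ (m : ℝ) ^ T / T.factorial := (le_div_iff₀ hFpos).2 h1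
    calc (m.choose T : ℝ) * q ^ T ≤ ((m : ℝ) ^ T / T.factorial) * q ^ T :=
          mul_le_mul_of_nonneg_right e1 (pow_nonneg hq T)
    _ = ((m : ℝ) * q) ^ T / T.factorial := by rw [mul_pow]; ring
    _ ≤ ((m : ℝ) * q) ^ T * Real.exp T / (T : ℝ) ^ T := by
        rw [div_le_div_iff₀ hFpos (pow_pos hTpos T)]
        have hA : (0 : ℝ) ≤ ((m : ℝ) * q) ^ T := pow_nonneg (mul_nonneg (Nat.cast_nonneg m) hq) T
        nlinarith [mul_le_mul_of_nonneg_left h2 hA]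
    _ = (Real.exp 1 * m * q / T) ^ T := by
        rw [div_pow, mul_pow, mul_pow, mul_pow, Real.exp_one_pow]
        ring
  have hhalf : Real.exp 1 * m * q / T ≤ 1 / 2 := by
    rw [div_le_iff₀ hTpos]
    have h2m : (2 : ℝ) * m ≤ (k : ℝ) ^ 2 := by exact_mod_cast hm
    have hmq : (m : ℝ) * q ≤ (T : ℝ) / 6 := by nlinarith [hT1, hq]
    have he : Real.exp 1 ≤ 3 := le_of_lt (lt_trans Real.exp_one_lt_d9 (by norm_num))
    nlinarith [Real.exp_pos 1, mul_nonneg (Nat.cast_nonneg m) hq]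
  have hpow : (Real.exp 1 * m * q / T) ^ T ≤ (1 / 2 : ℝ) ^ T :=
    pow_le_pow_left₀ (by positivity) hhalf T
  have hfin : ((1 : ℝ) / 2) ^ T ≤ Real.exp (-(2 * k * L)) := by
    have heq : ((1 : ℝ) / 2) ^ T = Real.exp (-((T : ℝ) * Real.log 2)) := by
      rw [← Real.exp_log (show (0 : ℝ) < 1 / 2 by norm_num), ← Real.exp_nat_mul]
      congr 1
      rw [one_div, Real.log_inv]
      ring
    rw [heq, Real.exp_le_exp]
    have hlog2 : (0.6931471803 : ℝ) < Real.log 2 := Real.log_two_gt_d9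
    have hkL : (0 : ℝ) ≤ (k : ℝ) * L := mul_nonneg (Nat.cast_nonneg k) hL
    nlinarith [mul_le_mul_of_nonneg_right hT2 (by norm_num : (0:ℝ) ≤ 0.6931471803), hlog2, hkL, hTpos]
  linarith [hchain, hpow, hfin]

lemma slots_empty (n : ℕ) : slots n ∅ = ∅ := by
  rw [slots_eq_image]; simp

lemma gnp_badF_le (n : ℕ) (hn : 1 ≤ n) (p : ENNReal) (hp : p ≤ 1) (F : Finset (Fin n)) :
    gnp n p hp {ω | ¬ ((edgesIn (graphOf ω) ↑F : ℝ) ≤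
        max (3 * F.card * Real.log n) (3 * (F.card : ℝ) ^ 2 * p.toReal))}
      ≤ ENNReal.ofReal (Real.exp (-(2 * F.card * Real.log n))) := by
  set L := Real.log n with hLdef
  set q := p.toReal with hqdef
  set k := F.card with hkdef
  set M := max (3 * (k : ℝ) * L) (3 * (k : ℝ) ^ 2 * q) with hMdef
  set T := ⌊M⌋₊ + 1 with hTdef
  have hL : 0 ≤ L := Real.log_nonneg (by exact_mod_cast hn)
  have hq0 : 0 ≤ q := ENNReal.toReal_nonneg
  have hM0 : 0 ≤ M := le_trans (by positivity) (le_max_left _ _)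
  have hTcast : (T : ℝ) = (⌊M⌋₊ : ℝ) + 1 := by push_cast [hTdef]; ring
  have hMT : M < (T : ℝ) := by rw [hTcast]; exact Nat.lt_floor_add_one M
  have hsub : {ω : Sym2 (Fin n) → Bool | ¬ ((edgesIn (graphOf ω) ↑F : ℝ) ≤
        max (3 * F.card * Real.log n) (3 * (F.card : ℝ) ^ 2 * p.toReal))} ⊆
      {ω | T ≤ ((slots n F).filter (fun e => ω e = true)).card} := by
    intro ω hω
    simp only [Set.mem_setOf_eq, not_le] at hω
    rw [edgesIn_eq n ω F] at hω
    have : M < (((slots n F).filter (fun e => ω e = true)).card : ℝ) := by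
      refine lt_of_le_of_lt ?_ hω
      exact le_of_eq rfl
    exact (Nat.floor_lt hM0).2 this
  refine le_trans (measure_mono hsub) (le_trans (gnp_tail n p hp F T) ?_)
  have hp_ne : p ≠ ⊤ := ne_top_of_le_ne_top ENNReal.one_ne_top hp
  have hpq : p = ENNReal.ofReal q := (ENNReal.ofReal_toReal hp_ne).symm
  rw [hpq, ← ENNReal.ofReal_pow hq0, ← ENNReal.ofReal_natCast,
    ← ENNReal.ofReal_mul (by positivity)]
  apply ENNReal.ofReal_le_ofReal
  refine tail_real (slots n F).card T k q L hq0 hL (two_mul_card_slots_le n F) ?_ ?_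
    (Nat.succ_pos _)
  · exact le_of_lt (lt_of_le_of_lt (le_max_right _ _) hMT)
  · exact le_of_lt (lt_of_le_of_lt (le_max_left _ _) hMT)

lemma gnp_bad_le (n : ℕ) (hn : 2 ≤ n) (p : ENNReal) (hp : p ≤ 1) :
    gnp n p hp {ω | ∀ U : Set (Fin n),
          (edgesIn (graphOf ω) U : ℝ) ≤
            max (3 * U.ncard * Real.log n) (3 * (U.ncard : ℝ) ^ 2 * p.toReal)}ᶜ
      ≤ ENNReal.ofReal (Real.exp ((n : ℝ)⁻¹) - 1) := by
  classical
  have hn1 : 1 ≤ n := le_trans one_le_two hn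
  set L := Real.log n with hLdef
  have hL : 0 ≤ L := Real.log_nonneg (by exact_mod_cast hn1)
  set x := Real.exp (-(2 * L)) with hxdef
  have hx0 : 0 ≤ x := (Real.exp_pos _).le
  -- step 1: the bad event is covered by the union of per-finset bad events
  have hsub : {ω : Sym2 (Fin n) → Bool | ∀ U : Set (Fin n),
          (edgesIn (graphOf ω) U : ℝ) ≤
            max (3 * U.ncard * Real.log n) (3 * (U.ncard : ℝ) ^ 2 * p.toReal)}ᶜ ⊆
      ⋃ F ∈ (Finset.univ : Finset (Finset (Fin n))).erase ∅,
        {ω | ¬ ((edgesIn (graphOf ω) ↑F : ℝ) ≤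
          max (3 * F.card * Real.log n) (3 * (F.card : ℝ) ^ 2 * p.toReal))} := by
    intro ω hω
    simp only [Set.mem_compl_iff, Set.mem_setOf_eq, not_forall] at hω
    obtain ⟨U, hU⟩ := hω
    have hUfin : U = ↑U.toFinset := (Set.coe_toFinset U).symm
    rw [hUfin, Set.ncard_coe_finset] at hU
    have hne : U.toFinset ≠ ∅ := by
      rintro h
      rw [h] at hU
      apply hU
      have : edgesIn (graphOf ω) ↑(∅ : Finset (Fin n)) = 0 := by
        rw [edgesIn_eq, slots_empty]; simp
      rw [this]
      simp
    exact Set.mem_iUnion₂.2 ⟨U.toFinset, Finset.mem_erase.2 ⟨hne, Finset.mem_univ _⟩, hU⟩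
  refine le_trans (measure_mono hsub) (le_trans (measure_biUnion_finset_le _ _) ?_)
  -- step 2: sum the per-finset bounds
  have hstep : ∀ F ∈ (Finset.univ : Finset (Finset (Fin n))).erase ∅,
      gnp n p hp {ω | ¬ ((edgesIn (graphOf ω) ↑F : ℝ) ≤
          max (3 * F.card * Real.log n) (3 * (F.card : ℝ) ^ 2 * p.toReal))}
        ≤ ENNReal.ofReal (x ^ F.card) := by
    intro F _
    refine le_trans (gnp_badF_le n hn1 p hp F) (le_of_eq ?_)
    congr 1
    rw [hxdef, ← Real.exp_nat_mul]
    congr 1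
    ring
  refine le_trans (Finset.sum_le_sum hstep) ?_
  rw [← ENNReal.ofReal_sum_of_nonneg (fun F _ => by positivity)]
  apply ENNReal.ofReal_le_ofReal
  -- step 3: the real sum bound
  have hsum_univ : ∑ F ∈ (Finset.univ : Finset (Finset (Fin n))), x ^ F.card = (x + 1) ^ n := by
    have := Finset.prod_add (fun _ : Fin n => x) (fun _ : Fin n => 1) Finset.univ
    simp only [Finset.prod_const, Finset.prod_const_one, mul_one] at this
    rw [Finset.card_univ, Fintype.card_fin] at this
    rw [← Finset.powerset_univ, this]
    simp
  have herase : ∑ F ∈ (Finset.univ : Finset (Finset (Fin n))).erase ∅, x ^ F.card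
      = (x + 1) ^ n - 1 := by
    have h := Finset.add_sum_erase (Finset.univ : Finset (Finset (Fin n)))
      (fun F => x ^ F.card) (Finset.mem_univ ∅)
    rw [hsum_univ] at h
    simp only [Finset.card_empty, pow_zero] at h
    linarith
  rw [herase]
  -- (x+1)^n - 1 ≤ exp(n x) - 1 = exp (1/n) - 1
  have hxval : (n : ℝ) * x = (n : ℝ)⁻¹ := by
    have hnpos : (0 : ℝ) < n := by positivity
    rw [hxdef, hLdef]
    rw [show -(2 * Real.log n) = -Real.log n + -Real.log n by ring, Real.exp_add,
      Real.exp_neg, Real.exp_log hnpos]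
    field_simp
  have hpow : (x + 1) ^ n ≤ Real.exp ((n : ℝ) * x) := by
    calc (x + 1) ^ n ≤ Real.exp x ^ n := by
          apply pow_le_pow_left₀ (by positivity) (Real.add_one_le_exp x)
    _ = Real.exp ((n : ℝ) * x) := (Real.exp_nat_mul x n).symm
  rw [hxval] at hpow
  linarith

/-- P2. Let `p ≥ (ln n)/n`. Then w.h.p. `G ~ G(n,p)` is such that
every vertex subset `U` spans at most `max {3|U| ln n, 3|U|² p}` edges. -/
theorem gnp_edges_in_sets (p : ℕ → ENNReal) (hp : ∀ n, p n ≤ 1)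
    (hlb : ∀ n : ℕ, ENNReal.ofReal (Real.log n / n) ≤ p n) :
    Tendsto
      (fun n => gnp n (p n) (hp n)
        {ω | ∀ U : Set (Fin n),
          (edgesIn (graphOf ω) U : ℝ) ≤
            max (3 * U.ncard * Real.log n) (3 * (U.ncard : ℝ) ^ 2 * (p n).toReal)})
      atTop (nhds 1) := by
  set G := fun n => {ω : Sym2 (Fin n) → Bool | ∀ U : Set (Fin n),
          (edgesIn (graphOf ω) U : ℝ) ≤
            max (3 * U.ncard * Real.log n) (3 * (U.ncard : ℝ) ^ 2 * (p n).toReal)} with hGdef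
  set b := fun n : ℕ => ENNReal.ofReal (Real.exp ((n : ℝ)⁻¹) - 1) with hbdef
  have hb0 : Tendsto b atTop (nhds 0) := by
    have h1 : Tendsto (fun n : ℕ => (n : ℝ)⁻¹) atTop (nhds 0) := by
      simpa using tendsto_one_div_atTop_nhds_zero_nat (𝕜 := ℝ)
    have h2 : Tendsto (fun n : ℕ => Real.exp ((n : ℝ)⁻¹) - 1) atTop (nhds 0) := by
      have hcomp : Tendsto (fun n : ℕ => Real.exp ((n : ℝ)⁻¹)) atTop (nhds (Real.exp 0)) :=
        (Real.continuous_exp.tendsto 0).comp h1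
      have := hcomp.sub (tendsto_const_nhds (x := (1 : ℝ)))
      simpa using this
    have := (ENNReal.continuous_ofReal.tendsto 0).comp h2
    rw [ENNReal.ofReal_zero] at this
    exact this
  have hlow : Tendsto (fun n => 1 - b n) atTop (nhds 1) := by
    have := ENNReal.Tendsto.sub (tendsto_const_nhds (x := (1 : ENNReal)) (f := atTop))
      hb0 (Or.inl ENNReal.one_ne_top)
    simpa using this
  refine tendsto_of_tendsto_of_tendsto_of_le_of_le' hlow tendsto_const_nhds ?_ ?_
  · filter_upwards [eventually_ge_atTop 2] with n hn
    haveI := gnp_isProb n (p n) (hp n)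
    have hbad := gnp_bad_le n hn (p n) (hp n)
    have h1 : (1 : ENNReal) ≤ gnp n (p n) (hp n) (G n) + gnp n (p n) (hp n) (G n)ᶜ := by
      have := measure_union_le (μ := gnp n (p n) (hp n)) (G n) (G n)ᶜ
      rw [Set.union_compl_self, measure_univ] at this
      exact this
    have : (1 : ENNReal) ≤ gnp n (p n) (hp n) (G n) + b n :=
      le_trans h1 (add_le_add le_rfl hbad)
    exact tsub_le_iff_right.2 this
  · filter_upwards with n
    haveI := gnp_isProb n (p n) (hp n)
    exact prob_le_one
end

section
/- Let p ≥ (ln n)/n. With probability tending to 1 as n → ∞, G ~ G(n,p) satisfies: every subset U of vertices with 1/p ≤ |U| ≤ n/(ln n) has external neighborhood of size at least n/4. -/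
open MeasureTheory Filter

/-- The external neighborhood of a vertex set `U` in a graph `G`. -/
def extNbhd {V : Type*} (G : SimpleGraph V) (U : Set V) : Set V :=
  {v | v ∉ U ∧ ∃ u ∈ U, G.Adj u v}

lemma pow_self_le_exp_mul_factorial : ∀ k : ℕ, (k:ℝ)^k ≤ Real.exp k * k.factorial := by
  intro k
  induction k with
  | zero => simp
  | succ k ih =>
    have hstep : ((k:ℝ)+1)^k ≤ Real.exp 1 * (k:ℝ)^k := by
      rcases Nat.eq_zero_or_pos k with h | h
      · subst h; simp [Real.one_le_exp]
      · have hk0 : (0:ℝ) < k := by exact_mod_cast h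
        have h1 : ((k:ℝ)+1) = k * (1 + 1/k) := by field_simp
        have h2 : (1 + 1/(k:ℝ))^k ≤ Real.exp 1 := by
          have := Real.add_one_le_exp (1/(k:ℝ))
          calc (1 + 1/(k:ℝ))^k ≤ (Real.exp (1/k))^k := by
                apply pow_le_pow_left₀ (by positivity) (by linarith)
            _ = Real.exp 1 := by
                rw [← Real.exp_nat_mul]; congr 1; field_simp
        calc ((k:ℝ)+1)^k = (k:ℝ)^k * (1+1/(k:ℝ))^k := by rw [h1, mul_pow]
          _ ≤ (k:ℝ)^k * Real.exp 1 := by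
              apply mul_le_mul_of_nonneg_left h2 (by positivity)
          _ = Real.exp 1 * (k:ℝ)^k := by ring
    have : ((k:ℕ)+1:ℝ)^(k+1) = ((k:ℝ)+1) * ((k:ℝ)+1)^k := by ring
    push_cast
    calc ((k:ℝ)+1)^(k+1) = ((k:ℝ)+1) * ((k:ℝ)+1)^k := by ring
      _ ≤ ((k:ℝ)+1) * (Real.exp 1 * (k:ℝ)^k) := by
          apply mul_le_mul_of_nonneg_left hstep (by positivity)
      _ ≤ ((k:ℝ)+1) * (Real.exp 1 * (Real.exp k * k.factorial)) := by
          apply mul_le_mul_of_nonneg_left _ (by positivity)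
          apply mul_le_mul_of_nonneg_left ih (Real.exp_pos 1).le
      _ = Real.exp ((k:ℝ)+1) * (((k:ℝ)+1) * k.factorial) := by
          rw [Real.exp_add]; ring
      _ = Real.exp ((k:ℝ)+1) * ((k+1).factorial) := by
          rw [Nat.factorial_succ]; push_cast; ring

lemma log_le_two_sqrt {x : ℝ} (hx : 0 < x) : Real.log x ≤ 2 * Real.sqrt x := by
  have h1 := Real.log_le_sub_one_of_pos (Real.sqrt_pos.mpr hx)
  have h2 : Real.log (Real.sqrt x) = Real.log x / 2 := Real.log_sqrt hx.le
  nlinarith [Real.sqrt_nonneg x]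

lemma choose_le_exp {n k : ℕ} (hL : (10:ℝ)^6 ≤ Real.log n)
    (hk : (k:ℝ) ≤ n / Real.log n) : (n.choose k : ℝ) ≤ Real.exp (0.01 * n) := by
  have hL0 : (0:ℝ) < Real.log n := by positivity
  have hn0 : (1:ℕ) ≤ n := by
    by_contra h
    push_neg at h
    interval_cases n <;> norm_num at hL
  have hn0' : (0:ℝ) < n := by exact_mod_cast hn0
  rcases Nat.eq_zero_or_pos k with rfl | hk1
  · simp; positivity
  have hk0 : (0:ℝ) < k := by exact_mod_cast hk1
  have h1 : (n.choose k : ℝ) * k.factorial ≤ (n:ℝ)^k := by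
    have h2 := Nat.descFactorial_eq_factorial_mul_choose n k
    have h3 : k.factorial * n.choose k ≤ n ^ k := h2 ▸ Nat.descFactorial_le_pow n k
    calc (n.choose k : ℝ) * k.factorial = ((k.factorial * n.choose k : ℕ) : ℝ) := by
          push_cast; ring
      _ ≤ ((n^k : ℕ) : ℝ) := by exact_mod_cast h3
      _ = (n:ℝ)^k := by push_cast; ring
  have hfac : (k:ℝ)^k ≤ Real.exp k * k.factorial := pow_self_le_exp_mul_factorial k
  have hfacpos : (0:ℝ) < k.factorial := by exact_mod_cast k.factorial_pos
  have h3 : (n.choose k : ℝ) ≤ (n:ℝ)^k * Real.exp k / (k:ℝ)^k := by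
    rw [le_div_iff₀ (by positivity)]
    calc (n.choose k:ℝ) * (k:ℝ)^k ≤ (n.choose k:ℝ) * (Real.exp k * k.factorial) := by
          apply mul_le_mul_of_nonneg_left hfac (by positivity)
      _ = ((n.choose k:ℝ) * k.factorial) * Real.exp k := by ring
      _ ≤ (n:ℝ)^k * Real.exp k := by
          apply mul_le_mul_of_nonneg_right h1 (Real.exp_pos _).le
  have hnk : (0:ℝ) < (n:ℝ)/k := by positivity
  have h4 : (n:ℝ)^k * Real.exp k / (k:ℝ)^k = Real.exp ((k:ℝ) * Real.log ((n:ℝ)/k) + k) := by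
    rw [Real.exp_add, Real.exp_nat_mul, Real.exp_log hnk, div_pow]
    field_simp
  refine (h3.trans_eq h4).trans (Real.exp_le_exp.mpr ?_)
  -- k * log(n/k) + k ≤ 0.01 n
  have hsq : Real.sqrt (Real.log n) ≥ 1000 := by
    have : Real.sqrt ((10:ℝ)^6) ≤ Real.sqrt (Real.log n) := Real.sqrt_le_sqrt hL
    have h6 : Real.sqrt ((10:ℝ)^6) = 1000 := by
      rw [show ((10:ℝ)^6) = 1000^2 by norm_num, Real.sqrt_sq (by norm_num)]
    linarith
  have hlogk : Real.log ((n:ℝ)/k) ≤ 2 * Real.sqrt ((n:ℝ)/k) := log_le_two_sqrt hnk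
  have hsqk : Real.sqrt ((n:ℝ)/k) = Real.sqrt n / Real.sqrt k := Real.sqrt_div (by positivity) _
  have hdiv : (k:ℝ) / Real.sqrt k = Real.sqrt k := Real.div_sqrt
  have hksq : Real.sqrt (k:ℝ) ≤ Real.sqrt ((n:ℝ)/Real.log n) := Real.sqrt_le_sqrt hk
  have hnL : Real.sqrt ((n:ℝ)/Real.log n) = Real.sqrt n / Real.sqrt (Real.log n) :=
    Real.sqrt_div (by positivity) _
  have hsk0 : (0:ℝ) < Real.sqrt k := Real.sqrt_pos.mpr hk0
  have hmulself : Real.sqrt (n:ℝ) * Real.sqrt (n:ℝ) = (n:ℝ) := Real.mul_self_sqrt hn0'.le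
  have hstep : (k:ℝ) * Real.sqrt ((n:ℝ)/k) ≤ (n:ℝ) / Real.sqrt (Real.log n) := by
    rw [hsqk]
    calc (k:ℝ) * (Real.sqrt n / Real.sqrt k) = ((k:ℝ)/Real.sqrt k) * Real.sqrt n := by ring
      _ = Real.sqrt k * Real.sqrt n := by rw [hdiv]
      _ ≤ (Real.sqrt n / Real.sqrt (Real.log n)) * Real.sqrt n := by
          apply mul_le_mul_of_nonneg_right (hnL ▸ hksq) (Real.sqrt_nonneg _)
      _ = (n:ℝ) / Real.sqrt (Real.log n) := by
          rw [div_mul_eq_mul_div, hmulself]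
  have hbound1 : (k:ℝ) * Real.log ((n:ℝ)/k) ≤ 2 * ((n:ℝ) / Real.sqrt (Real.log n)) := by
    calc (k:ℝ) * Real.log ((n:ℝ)/k) ≤ (k:ℝ) * (2 * Real.sqrt ((n:ℝ)/k)) :=
          mul_le_mul_of_nonneg_left hlogk hk0.le
      _ = 2 * ((k:ℝ) * Real.sqrt ((n:ℝ)/k)) := by ring
      _ ≤ 2 * ((n:ℝ) / Real.sqrt (Real.log n)) := by linarith
  have hsqL0 : (0:ℝ) < Real.sqrt (Real.log n) := Real.sqrt_pos.mpr hL0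
  have hbound2 : (n:ℝ) / Real.sqrt (Real.log n) ≤ (n:ℝ) / 1000 :=
    div_le_div_of_nonneg_left hn0'.le (by norm_num) hsq
  have hbound3 : (k:ℝ) ≤ (n:ℝ) / 10^6 := by
    refine hk.trans (div_le_div_of_nonneg_left hn0'.le (by norm_num) hL)
  nlinarith

lemma gnp_cyl (n : ℕ) (p : ENNReal) (hp : p ≤ 1) (E : Finset (Sym2 (Fin n))) :
    gnp n p hp {ω | ∀ e ∈ E, ω e = false} = (1-p) ^ E.card := by
  classical
  have hset : {ω : Sym2 (Fin n) → Bool | ∀ e ∈ E, ω e = false}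
      = Set.pi Set.univ (fun e => if e ∈ E then ({false} : Set Bool) else Set.univ) := by
    ext ω
    simp only [Set.mem_setOf_eq, Set.mem_pi, Set.mem_univ, forall_true_left]
    constructor
    · intro h e
      by_cases he : e ∈ E <;> simp [he, h e]
    · intro h e he
      have := h e
      simp [he] at this
      exact this
  rw [gnp, hset, Measure.pi_pi]
  have hsingle : ∀ e : Sym2 (Fin n),
      (PMF.bernoulli p.toNNReal (by simpa using ENNReal.toNNReal_mono ENNReal.one_ne_top hp)).toMeasure (if e ∈ E then ({false}:Set Bool) else Set.univ)
      = if e ∈ E then (1-p) else 1 := by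
    intro e
    by_cases he : e ∈ E <;> simp only [he, if_true, if_false]
    · rw [PMF.toMeasure_apply_singleton _ _ (measurableSet_singleton _)]
      refine (PMF.bernoulli_apply ..).trans ?_
      simp [ENNReal.coe_sub, ENNReal.coe_toNNReal (ne_top_of_le_ne_top ENNReal.one_ne_top hp)]
    · simp
      exact add_tsub_cancel_of_le (PMF.coe_le_one _ _)
  simp_rw [hsingle]
  rw [Finset.prod_ite_mem, Finset.univ_inter, Finset.prod_const]

set_option maxHeartbeats 2000000 in
lemma main_bound (n : ℕ) (q : ENNReal) (hq : q ≤ 1)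
    (hL : (10:ℝ)^6 ≤ Real.log n)
    (hq0 : ENNReal.ofReal (Real.log n / n) ≤ q) :
    gnp n q hq {ω | ¬ ∀ U : Set (Fin n),
          1 / q.toReal ≤ (U.ncard : ℝ) →
          (U.ncard : ℝ) ≤ n / Real.log n →
          ((extNbhd (graphOf ω) U).ncard : ℝ) ≥ n / 4}
    ≤ ENNReal.ofReal (Real.exp (-(0.01) * n)) := by
  classical
  have hL0 : (0:ℝ) < Real.log n := by positivity
  have hn1 : 1 ≤ n := by
    by_contra h; push_neg at h; interval_cases n <;> norm_num at hL0
  have hnR : (0:ℝ) < n := by exact_mod_cast hn1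
  have hn6 : (10:ℝ)^6 ≤ n := by
    have := Real.log_le_sub_one_of_pos hnR
    linarith
  -- p basic facts
  have hqt : q ≠ ⊤ := ne_top_of_le_ne_top ENNReal.one_ne_top hq
  set pt := q.toReal with hpt_def
  have hpt1 : pt ≤ 1 := by
    have := ENNReal.toReal_mono ENNReal.one_ne_top hq
    simpa using this
  have hptlb : Real.log n / n ≤ pt :=
    (ENNReal.ofReal_le_iff_le_toReal hqt).mp hq0
  have hptpos : 0 < pt := lt_of_lt_of_le (by positivity) hptlb
  -- m
  set m : ℕ := 74 * n / 100 with hm_def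
  have hm_ub : (m:ℝ) ≤ 0.74 * n := by
    have h1 : 100 * m ≤ 74 * n := Nat.mul_div_le (74*n) 100 |>.trans_eq' (by ring)
    have h1' : (100:ℝ) * m ≤ 74 * n := by exact_mod_cast h1
    linarith
  have hm_lb : 0.74 * n - 1 ≤ (m:ℝ) := by
    have h1 := Nat.div_add_mod (74*n) 100
    have h2 : (74*n) % 100 < 100 := Nat.mod_lt _ (by norm_num)
    have h1' : (100:ℝ) * m + ((74*n) % 100 : ℕ) = 74 * n := by exact_mod_cast h1
    have h2' : ((74*n) % 100 : ℕ) < (100:ℝ) := by exact_mod_cast h2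
    linarith
  have hm_le_n : m ≤ n := by
    calc m = 74 * n / 100 := rfl
      _ ≤ 100 * n / 100 := Nat.div_le_div_right (by omega)
      _ = n := by omega
  -- index sets
  set K : ℕ := ⌊(n:ℝ) / Real.log n⌋₊ with hK_def
  set E₀ : Finset (Fin n) → Finset (Fin n) → Finset (Sym2 (Fin n)) :=
    fun U S => (U ×ˢ S).image (fun x : Fin n × Fin n => Sym2.mk x.1 x.2) with hE_def
  set Cyl : Finset (Fin n) → Finset (Fin n) → Set (Sym2 (Fin n) → Bool) :=
    fun U S => {ω | ∀ e ∈ E₀ U S, ω e = false} with hCyl_def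
  set P1 : Finset (Finset (Fin n)) :=
    Finset.univ.filter (fun U => 1/pt ≤ (U.card:ℝ) ∧ (U.card:ℝ) ≤ n / Real.log n) with hP1_def
  set P2 : Finset (Fin n) → Finset (Finset (Fin n)) :=
    fun U => Finset.univ.filter (fun S => S.card = m ∧ Disjoint U S) with hP2_def
  -- containment
  have hsub : {ω : Sym2 (Fin n) → Bool | ¬ ∀ U : Set (Fin n),
          1 / q.toReal ≤ (U.ncard : ℝ) →
          (U.ncard : ℝ) ≤ n / Real.log n →
          ((extNbhd (graphOf ω) U).ncard : ℝ) ≥ n / 4}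
      ⊆ ⋃ U ∈ P1, ⋃ S ∈ P2 U, Cyl U S := by
    intro ω hω
    simp only [Set.mem_setOf_eq] at hω
    push_neg at hω
    obtain ⟨U, h1, h2, h3⟩ := hω
    have hUfin : U.Finite := Set.toFinite U
    set Uf := hUfin.toFinset with hUf_def
    have hUcard : Uf.card = U.ncard := (Set.ncard_eq_toFinset_card U hUfin).symm
    set N := extNbhd (graphOf ω) U with hN_def
    have hNfin : N.Finite := Set.toFinite N
    set Nf := hNfin.toFinset with hNf_def
    have hNcard : Nf.card = N.ncard := (Set.ncard_eq_toFinset_card N hNfin).symm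
    set c := Finset.univ \ (Uf ∪ Nf) with hc_def
    have hccard : c.card = n - (Uf ∪ Nf).card := by
      rw [hc_def, Finset.card_sdiff_of_subset (Finset.subset_univ _), Finset.card_univ, Fintype.card_fin]
    have hunion_le : (Uf ∪ Nf).card ≤ n := by
      calc (Uf ∪ Nf).card ≤ Finset.univ.card := Finset.card_le_univ _
        _ = n := by rw [Finset.card_univ, Fintype.card_fin]
    have hccardR : (c.card : ℝ) = n - ((Uf ∪ Nf).card : ℝ) := by
      rw [hccard, Nat.cast_sub hunion_le]
    have hNlt : (Nf.card : ℝ) < n / 4 := by rw [hNcard]; linarith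
    have hUle : (Uf.card : ℝ) ≤ (n:ℝ) / 10^6 := by
      rw [hUcard]
      refine h2.trans (div_le_div_of_nonneg_left hnR.le (by norm_num) hL)
    have hm_le_c : m ≤ c.card := by
      have hcu : ((Uf ∪ Nf).card : ℝ) ≤ (Uf.card : ℝ) + Nf.card := by
        exact_mod_cast Finset.card_union_le _ _
      have : (m:ℝ) ≤ (c.card : ℝ) := by
        rw [hccardR]
        nlinarith
      exact_mod_cast this
    obtain ⟨S, hSsub, hScard⟩ := Finset.exists_subset_card_eq hm_le_c
    have hSdisjU : Disjoint Uf S := by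
      rw [Finset.disjoint_left]
      intro a haU haS
      have := hSsub haS
      rw [hc_def, Finset.mem_sdiff] at this
      exact this.2 (Finset.mem_union_left _ haU)
    have hUP1 : Uf ∈ P1 := by
      rw [hP1_def, Finset.mem_filter]
      refine ⟨Finset.mem_univ _, ?_, ?_⟩ <;> rw [hUcard] <;> [exact h1; exact h2]
    have hSP2 : S ∈ P2 Uf := by
      rw [hP2_def, Finset.mem_filter]
      exact ⟨Finset.mem_univ _, hScard, hSdisjU⟩
    refine Set.mem_biUnion hUP1 (Set.mem_biUnion hSP2 ?_)
    intro e he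
    rw [hE_def] at he
    simp only [Finset.mem_image, Finset.mem_product, Prod.exists] at he
    obtain ⟨u, v, ⟨huU, hvS⟩, rfl⟩ := he
    by_contra htrue
    have ht : ω (Sym2.mk u v) = true := by
      cases hωe : ω (Sym2.mk u v) with
      | false => exact absurd hωe htrue
      | true => rfl
    have hvc := hSsub hvS
    rw [hc_def, Finset.mem_sdiff, Finset.mem_union] at hvc
    push_neg at hvc
    have hvU : v ∉ U := fun h => hvc.2.1 (hUfin.mem_toFinset.mpr h)
    have hvN : v ∉ N := fun h => hvc.2.2 (hNfin.mem_toFinset.mpr h)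
    have huU' : u ∈ U := hUfin.mem_toFinset.mp huU
    have hadj : (graphOf ω).Adj u v := by
      rw [graphOf, SimpleGraph.fromEdgeSet_adj]
      exact ⟨ht, fun h => hvU (h ▸ huU')⟩
    exact hvN ⟨hvU, u, huU', hadj⟩
  -- per-cylinder bound
  have hcyl_bound : ∀ U ∈ P1, ∀ S ∈ P2 U,
      gnp n q hq (Cyl U S) ≤ ENNReal.ofReal (Real.exp (-(m:ℝ))) := by
    intro U hU S hS
    rw [hP1_def, Finset.mem_filter] at hU
    rw [hP2_def, Finset.mem_filter] at hS
    obtain ⟨-, hU1, hU2⟩ := hU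
    obtain ⟨-, hS1, hS2⟩ := hS
    have hEcard : (E₀ U S).card = U.card * m := by
      rw [hE_def]
      rw [Finset.card_image_of_injOn, Finset.card_product, hS1]
      intro x hx y hy hxy
      simp only [Finset.mem_coe, Finset.mem_product] at hx hy
      rw [Sym2.mk_eq_mk_iff] at hxy
      rcases hxy with h | h
      · exact Prod.ext (congrArg Prod.fst h) (congrArg Prod.snd h)
      · exfalso
        have h1 : x.1 = y.2 := congrArg Prod.fst h
        exact Finset.disjoint_left.mp hS2 hx.1 (h1 ▸ hy.2)
    rw [hCyl_def]
    rw [gnp_cyl n q hq (E₀ U S), hEcard]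
    have h1q : (1 - q) = ENNReal.ofReal (1 - pt) := by
      rw [ENNReal.ofReal_sub 1 ENNReal.toReal_nonneg, ENNReal.ofReal_one,
        ENNReal.ofReal_toReal hqt]
    rw [h1q, ← ENNReal.ofReal_pow (by linarith)]
    apply ENNReal.ofReal_le_ofReal
    have hk1 : 1 ≤ pt * U.card := by
      rw [div_le_iff₀ hptpos] at hU1
      linarith
    have hexp : (1 - pt) ≤ Real.exp (-pt) := by
      have := Real.add_one_le_exp (-pt); linarith
    calc (1-pt)^(U.card*m) ≤ (Real.exp (-pt))^(U.card*m) :=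
          pow_le_pow_left₀ (by linarith) hexp _
      _ = Real.exp (-(pt * ((U.card:ℝ) * m))) := by
          rw [← Real.exp_nat_mul]; congr 1; push_cast; ring
      _ ≤ Real.exp (-(m:ℝ)) := by
          apply Real.exp_le_exp.mpr
          have hm0 : (0:ℝ) ≤ (m:ℝ) := Nat.cast_nonneg _
          nlinarith
  -- counting
  have hP2card : ∀ U : Finset (Fin n), (P2 U).card ≤ n.choose m := by
    intro U
    have hsub2 : P2 U ⊆ Finset.powersetCard m Finset.univ := by
      intro S hS
      rw [hP2_def, Finset.mem_filter] at hS
      exact Finset.mem_powersetCard.mpr ⟨Finset.subset_univ _, hS.2.1⟩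
    calc (P2 U).card ≤ (Finset.powersetCard m (Finset.univ : Finset (Fin n))).card :=
          Finset.card_le_card hsub2
      _ = n.choose m := by
          rw [Finset.card_powersetCard, Finset.card_univ, Fintype.card_fin]
  have hP1card : P1.card ≤ ∑ k ∈ Finset.range (K+1), n.choose k := by
    have hsub2 : P1 ⊆ (Finset.range (K+1)).biUnion
        (fun k => Finset.powersetCard k Finset.univ) := by
      intro U hU
      rw [hP1_def, Finset.mem_filter] at hU
      have hUK : U.card ≤ K := Nat.le_floor hU.2.2
      exact Finset.mem_biUnion.mpr ⟨U.card, Finset.mem_range.mpr (by omega),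
        Finset.mem_powersetCard.mpr ⟨Finset.subset_univ _, rfl⟩⟩
    calc P1.card ≤ _ := Finset.card_le_card hsub2
      _ ≤ ∑ k ∈ Finset.range (K+1),
            (Finset.powersetCard k (Finset.univ : Finset (Fin n))).card :=
          Finset.card_biUnion_le
      _ = ∑ k ∈ Finset.range (K+1), n.choose k := by
          refine Finset.sum_congr rfl fun k _ => ?_
          rw [Finset.card_powersetCard, Finset.card_univ, Fintype.card_fin]
  set A : ℕ := ∑ k ∈ Finset.range (K+1), n.choose k with hA_def
  set B : ℕ := n.choose m with hB_def
  -- union bound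
  have hmain : gnp n q hq {ω : Sym2 (Fin n) → Bool | ¬ ∀ U : Set (Fin n),
          1 / q.toReal ≤ (U.ncard : ℝ) →
          (U.ncard : ℝ) ≤ n / Real.log n →
          ((extNbhd (graphOf ω) U).ncard : ℝ) ≥ n / 4}
      ≤ (A : ENNReal) * ((B : ENNReal) * ENNReal.ofReal (Real.exp (-(m:ℝ)))) := by
    calc gnp n q hq _ ≤ gnp n q hq (⋃ U ∈ P1, ⋃ S ∈ P2 U, Cyl U S) := measure_mono hsub
      _ ≤ ∑ U ∈ P1, gnp n q hq (⋃ S ∈ P2 U, Cyl U S) := measure_biUnion_finset_le _ _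
      _ ≤ ∑ U ∈ P1, ∑ S ∈ P2 U, gnp n q hq (Cyl U S) :=
          Finset.sum_le_sum fun U _ => measure_biUnion_finset_le _ _
      _ ≤ ∑ U ∈ P1, ∑ _S ∈ P2 U, ENNReal.ofReal (Real.exp (-(m:ℝ))) :=
          Finset.sum_le_sum fun U hU => Finset.sum_le_sum fun S hS => hcyl_bound U hU S hS
      _ = ∑ U ∈ P1, ((P2 U).card : ENNReal) * ENNReal.ofReal (Real.exp (-(m:ℝ))) := by
          refine Finset.sum_congr rfl fun U _ => ?_
          rw [Finset.sum_const, nsmul_eq_mul]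
      _ ≤ ∑ _U ∈ P1, (B : ENNReal) * ENNReal.ofReal (Real.exp (-(m:ℝ))) :=
          Finset.sum_le_sum fun U _ =>
            mul_le_mul_left (Nat.cast_le.mpr (hP2card U)) _
      _ = (P1.card : ENNReal) * ((B:ENNReal) * ENNReal.ofReal (Real.exp (-(m:ℝ)))) := by
          rw [Finset.sum_const, nsmul_eq_mul]
      _ ≤ (A : ENNReal) * ((B:ENNReal) * ENNReal.ofReal (Real.exp (-(m:ℝ)))) :=
          mul_le_mul_left (Nat.cast_le.mpr hP1card) _
  refine hmain.trans ?_
  -- real arithmetic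
  rw [← ENNReal.ofReal_natCast A, ← ENNReal.ofReal_natCast B,
    ← ENNReal.ofReal_mul (by positivity), ← ENNReal.ofReal_mul (by positivity)]
  apply ENNReal.ofReal_le_ofReal
  have hKle : (K:ℝ) ≤ (n:ℝ) / Real.log n := Nat.floor_le (by positivity)
  have hA_bd : (A:ℝ) ≤ ((K:ℝ)+1) * Real.exp (0.01 * n) := by
    have h1 : (A:ℝ) = ∑ k ∈ Finset.range (K+1), ((n.choose k : ℕ) : ℝ) := by
      rw [hA_def]; push_cast; ring_nf
    rw [h1]
    calc ∑ k ∈ Finset.range (K+1), ((n.choose k : ℕ) : ℝ)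
        ≤ ∑ _k ∈ Finset.range (K+1), Real.exp (0.01 * n) := by
          refine Finset.sum_le_sum fun k hk => ?_
          refine choose_le_exp hL ?_
          have hkK : k ≤ K := by
            have := Finset.mem_range.mp hk; omega
          calc (k:ℝ) ≤ (K:ℝ) := by exact_mod_cast hkK
            _ ≤ (n:ℝ) / Real.log n := hKle
      _ = ((K:ℝ)+1) * Real.exp (0.01 * n) := by
          rw [Finset.sum_const, Finset.card_range, nsmul_eq_mul]; push_cast; ring
  have hK1n : ((K:ℝ)+1) ≤ (n:ℝ) := by
    have : (n:ℝ) / Real.log n ≤ (n:ℝ)/10^6 :=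
      div_le_div_of_nonneg_left hnR.le (by norm_num) hL
    nlinarith
  have hn_exp : (n:ℝ) ≤ Real.exp (0.002 * n) := by
    have h1 : Real.exp (0.002 * n) = Real.exp (0.001 * n) * Real.exp (0.001*n) := by
      rw [← Real.exp_add]; ring_nf
    have h2 : 1 + 0.001 * (n:ℝ) ≤ Real.exp (0.001 * n) := by
      have := Real.add_one_le_exp (0.001 * (n:ℝ)); linarith
    have h3 : (1 + 0.001*(n:ℝ))*(1+0.001*(n:ℝ)) ≤ Real.exp (0.001*n) * Real.exp (0.001*n) :=
      mul_le_mul h2 h2 (by positivity) (Real.exp_pos _).le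
    have h4 : (n:ℝ) * (10:ℝ)^6 ≤ (n:ℝ) * (n:ℝ) := by
      apply mul_le_mul_of_nonneg_left hn6 hnR.le
    have h5 : 1 + 0.002*(n:ℝ) + 0.000001*((n:ℝ)*(n:ℝ))
        ≤ Real.exp (0.001*n) * Real.exp (0.001*n) := by
      calc 1 + 0.002*(n:ℝ) + 0.000001*((n:ℝ)*(n:ℝ))
          = (1 + 0.001*(n:ℝ))*(1+0.001*(n:ℝ)) := by ring
        _ ≤ _ := h3
    linarith
  have hB_bd : (B:ℝ) ≤ Real.exp ((n:ℝ) * Real.log 2) := by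
    have h1 : B ≤ 2^n := by
      rw [hB_def]
      calc n.choose m ≤ ∑ i ∈ Finset.range (n+1), n.choose i :=
            Finset.single_le_sum (fun i _ => Nat.zero_le _)
              (Finset.mem_range.mpr (by omega))
        _ = 2^n := Nat.sum_range_choose n
    have h2 : ((2:ℝ))^n = Real.exp ((n:ℝ) * Real.log 2) := by
      rw [Real.exp_nat_mul, Real.exp_log two_pos]
    calc (B:ℝ) ≤ ((2^n : ℕ):ℝ) := by exact_mod_cast h1
      _ = (2:ℝ)^n := by push_cast; ring
      _ = Real.exp ((n:ℝ) * Real.log 2) := h2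
  have hlog2 : Real.log 2 < 0.6931471808 := Real.log_two_lt_d9
  have hexp_sum : Real.exp (0.002*n) * Real.exp (0.01 * n) *
      (Real.exp ((n:ℝ)*Real.log 2) * Real.exp (-(m:ℝ)))
      ≤ Real.exp (-(0.01) * n) := by
    rw [← Real.exp_add, ← Real.exp_add, ← Real.exp_add]
    apply Real.exp_le_exp.mpr
    have h6 : (n:ℝ) * Real.log 2 ≤ (n:ℝ) * 0.6931471808 :=
      mul_le_mul_of_nonneg_left hlog2.le hnR.le
    linarith
  calc (A:ℝ) * ((B:ℝ) * Real.exp (-(m:ℝ)))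
      ≤ (((K:ℝ)+1) * Real.exp (0.01*n)) * (Real.exp ((n:ℝ)*Real.log 2) * Real.exp (-(m:ℝ))) := by
        apply mul_le_mul hA_bd ?_ (by positivity) (by positivity)
        apply mul_le_mul_of_nonneg_right hB_bd (Real.exp_pos _).le
    _ ≤ (Real.exp (0.002*n) * Real.exp (0.01*n)) *
        (Real.exp ((n:ℝ)*Real.log 2) * Real.exp (-(m:ℝ))) := by
        apply mul_le_mul_of_nonneg_right ?_ (by positivity)
        apply mul_le_mul_of_nonneg_right (hK1n.trans hn_exp) (Real.exp_pos _).le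
    _ ≤ Real.exp (-(0.01) * n) := hexp_sum

/-- P5. Let `p ≥ (ln n)/n`. Then w.h.p. `G ~ G(n,p)` is such that
every `U` with `1/p ≤ |U| ≤ n/ln n` has external neighborhood of size at least `n/4`. -/
theorem gnp_ext_neighborhood (p : ℕ → ENNReal) (hp : ∀ n, p n ≤ 1)
    (hlb : ∀ n : ℕ, ENNReal.ofReal (Real.log n / n) ≤ p n) :
    Tendsto
      (fun n => gnp n (p n) (hp n)
        {ω | ∀ U : Set (Fin n),
          1 / (p n).toReal ≤ (U.ncard : ℝ) →
          (U.ncard : ℝ) ≤ n / Real.log n →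
          ((extNbhd (graphOf ω) U).ncard : ℝ) ≥ n / 4})
      atTop (nhds 1) := by
  haveI : ∀ n, IsProbabilityMeasure (gnp n (p n) (hp n)) := fun n =>
    inferInstanceAs (IsProbabilityMeasure
      (Measure.pi fun _ : Sym2 (Fin n) => (PMF.bernoulli (p n).toNNReal (by simpa using ENNReal.toNNReal_mono ENNReal.one_ne_top (hp n))).toMeasure))
  set A : ∀ n : ℕ, Set (Sym2 (Fin n) → Bool) := fun n =>
    {ω | ∀ U : Set (Fin n),
      1 / (p n).toReal ≤ (U.ncard : ℝ) →
      (U.ncard : ℝ) ≤ n / Real.log n →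
      ((extNbhd (graphOf ω) U).ncard : ℝ) ≥ n / 4} with hA_def
  have hlog : Tendsto (fun n : ℕ => Real.log n) atTop atTop :=
    Real.tendsto_log_atTop.comp tendsto_natCast_atTop_atTop
  have hev : ∀ᶠ n : ℕ in atTop,
      gnp n (p n) (hp n) ((A n)ᶜ) ≤ ENNReal.ofReal (Real.exp (-(0.01) * n)) := by
    filter_upwards [hlog.eventually_ge_atTop ((10:ℝ)^6)] with n hn
    have : (A n)ᶜ = {ω | ¬ ∀ U : Set (Fin n),
        1 / (p n).toReal ≤ (U.ncard : ℝ) →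
        (U.ncard : ℝ) ≤ n / Real.log n →
        ((extNbhd (graphOf ω) U).ncard : ℝ) ≥ n / 4} := Set.compl_setOf _
    rw [this]
    exact main_bound n (p n) (hp n) hn (hlb n)
  have hlower : ∀ n, 1 - gnp n (p n) (hp n) ((A n)ᶜ) ≤ gnp n (p n) (hp n) (A n) := by
    intro n
    have h1 : (1 : ENNReal) ≤ gnp n (p n) (hp n) (A n) + gnp n (p n) (hp n) ((A n)ᶜ) := by
      calc (1:ENNReal) = gnp n (p n) (hp n) Set.univ := (measure_univ).symm
        _ = gnp n (p n) (hp n) ((A n) ∪ (A n)ᶜ) := by rw [Set.union_compl_self]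
        _ ≤ _ := measure_union_le _ _
    exact tsub_le_iff_right.mpr h1
  have hgle : ∀ᶠ n : ℕ in atTop,
      (1 : ENNReal) - ENNReal.ofReal (Real.exp (-(0.01) * n)) ≤
        gnp n (p n) (hp n) (A n) := by
    filter_upwards [hev] with n hn
    exact le_trans (tsub_le_tsub_left hn 1) (hlower n)
  have hexp0 : Tendsto (fun n : ℕ => Real.exp (-(0.01) * n)) atTop (nhds 0) := by
    apply Real.tendsto_exp_atBot.comp
    have h1 : Tendsto (fun n : ℕ => (n:ℝ)) atTop atTop := tendsto_natCast_atTop_atTop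
    have h2 : Tendsto (fun x : ℝ => -(0.01) * x) atTop atBot :=
      (tendsto_const_mul_atBot_of_neg (by norm_num)).mpr tendsto_id
    exact h2.comp h1
  have hof0 : Tendsto (fun n : ℕ => ENNReal.ofReal (Real.exp (-(0.01) * n)))
      atTop (nhds 0) := by
    have := ENNReal.tendsto_ofReal hexp0
    simpa using this
  have hg : Tendsto (fun n : ℕ => (1:ENNReal) - ENNReal.ofReal (Real.exp (-(0.01) * n)))
      atTop (nhds 1) := by
    have := ENNReal.Tendsto.sub (tendsto_const_nhds (x := (1:ENNReal))) hof0
      (Or.inl ENNReal.one_ne_top)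
    simpa using this
  refine tendsto_of_tendsto_of_tendsto_of_le_of_le' hg tendsto_const_nhds hgle ?_
  exact Eventually.of_forall fun n => prob_le_one
end

section
/- Let ε > 0, p ≥ (ln n)/n, f(n) = np/ln n, and α ≥ √(4/f(n)) + ε. With probability tending to 1 as n → ∞, G ~ G(n,p) satisfies: for every vertex subset U, the number of edges between U and its complement is at least (1-α)·|U|·(n-|U|)·p. -/
open MeasureTheory Filter

/-- The number of edges of `G` with one endpoint in `A` and one endpoint in `B`. -/
noncomputable def edgesBetween {V : Type*} (G : SimpleGraph V) (A B : Set V) : ℕ :=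
  {e ∈ G.edgeSet | ∃ a ∈ A, ∃ b ∈ B, e = s(a, b)}.ncard


/-! ### Auxiliary lemmas -/

/-- Calculus lemma: `a²/2 ≤ a + (1-a)·log(1-a)` for `a ∈ [0,1)`. -/
lemma sq_half_le_entropy {a : ℝ} (h0 : 0 ≤ a) (h1 : a < 1) :
    a ^ 2 / 2 ≤ a + (1 - a) * Real.log (1 - a) := by
  set f : ℝ → ℝ := fun x => x + (1 - x) * Real.log (1 - x) - x ^ 2 / 2 with hf
  have key : ∀ x ∈ Set.Ico (0:ℝ) 1, 0 ≤ f x := by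
    have hmono : MonotoneOn f (Set.Ico (0:ℝ) 1) := by
      have hderiv : ∀ x ∈ Set.Ioo (0:ℝ) 1, HasDerivAt f (-Real.log (1 - x) - x) x := by
        intro x hx
        have hx1 : (1:ℝ) - x ≠ 0 := by nlinarith [hx.2]
        have h1 : HasDerivAt (fun y : ℝ => 1 - y) (-1) x := by
          simpa using (hasDerivAt_id x).const_sub 1
        have hlog : HasDerivAt (fun y : ℝ => Real.log (1 - y)) (-1 / (1 - x)) x :=
          h1.log hx1
        have hprod : HasDerivAt (fun y : ℝ => (1 - y) * Real.log (1 - y))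
            ((-1) * Real.log (1 - x) + (1 - x) * (-1 / (1 - x))) x := h1.mul hlog
        have hsq : HasDerivAt (fun y : ℝ => y ^ 2 / 2) x x := by
          simpa using ((hasDerivAt_pow 2 x).div_const 2)
        have := ((hasDerivAt_id x).add hprod).sub hsq
        refine this.congr_deriv ?_
        field_simp
        ring
      apply monotoneOn_of_deriv_nonneg (convex_Ico 0 1)
      · apply ContinuousOn.sub
        apply ContinuousOn.add continuousOn_id
        · apply ContinuousOn.mul
          · fun_prop
          · apply ContinuousOn.log
            · fun_prop
            · intro x hx; nlinarith [hx.2]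
        · fun_prop
      · intro x hx
        rw [interior_Ico] at hx
        exact ((hderiv x hx).differentiableAt).differentiableWithinAt
      · intro x hx
        rw [interior_Ico] at hx
        rw [(hderiv x hx).deriv]
        have : Real.log (1 - x) ≤ (1 - x) - 1 :=
          Real.log_le_sub_one_of_pos (by nlinarith [hx.2])
        linarith
    intro x hx
    have h0' : f 0 = 0 := by simp [hf]
    have := hmono (Set.mem_Ico.2 ⟨le_refl 0, by norm_num⟩) hx hx.1
    linarith [this, h0'.symm.le]
  have := key a ⟨h0, h1⟩
  simp only [hf] at this
  linarith

variable {n : ℕ} {p : ENNReal} (hp : p ≤ 1)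

lemma gnp_singleton (ω : Sym2 (Fin n) → Bool) :
    gnp n p hp {ω} = ∏ e : Sym2 (Fin n), (if ω e then p else 1 - p) := by
  rw [gnp, ← Set.univ_pi_singleton, Measure.pi_pi]
  refine Finset.prod_congr rfl fun e _ => ?_
  rw [PMF.toMeasure_apply_singleton _ _ (measurableSet_singleton _)]
  refine (PMF.bernoulli_apply _ _).trans ?_
  cases ω e <;> simp [ENNReal.coe_sub, ENNReal.coe_toNNReal (ne_top_of_le_ne_top ENNReal.one_ne_top hp)]

lemma gnp_apply (A : Set (Sym2 (Fin n) → Bool)) :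
    gnp n p hp A = ∑ ω : Sym2 (Fin n) → Bool, A.indicator (fun ω => gnp n p hp {ω}) ω := by
  rw [← MeasureTheory.Measure.tsum_indicator_apply_singleton _ A (A.to_countable.measurableSet),
    tsum_fintype]

/-- Chernoff / Markov bound for the lower tail of the number of present edges in `S`. -/
lemma gnp_chernoff (S : Finset (Sym2 (Fin n))) (c : ENNReal) (hc1 : c ≤ 1) (hc0 : c ≠ 0)
    (θ : ℝ) :
    gnp n p hp {ω | (((S.filter fun e => ω e = true).card : ℝ)) < θ} ≤
      (c * p + (1 - p)) ^ S.card / c ^ θ := by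
  classical
  set μ := gnp n p hp with hμ
  set X : (Sym2 (Fin n) → Bool) → ℕ := fun ω => (S.filter fun e => ω e = true).card with hX
  set E : Set (Sym2 (Fin n) → Bool) := {ω | ((X ω : ℝ)) < θ} with hE
  have hctop : c ≠ ⊤ := ne_top_of_le_ne_top ENNReal.one_ne_top hc1
  have hcθ0 : c ^ θ ≠ 0 := (ENNReal.rpow_pos (pos_iff_ne_zero.2 hc0) hctop).ne'
  have hcθtop : c ^ θ ≠ ⊤ := by
    intro h
    rcases ENNReal.rpow_eq_top_iff.1 h with ⟨h1, _⟩ | ⟨h1, _⟩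
    · exact hc0 h1
    · exact hctop h1
  -- key identity
  have key : ∑ ω : Sym2 (Fin n) → Bool, c ^ X ω * μ {ω} = (c * p + (1 - p)) ^ S.card := by
    have hpow : ∀ ω : Sym2 (Fin n) → Bool,
        c ^ X ω = ∏ e : Sym2 (Fin n), (if e ∈ S ∧ ω e = true then c else 1) := by
      intro ω
      rw [hX]
      have : ∀ e : Sym2 (Fin n), (if e ∈ S ∧ ω e = true then c else 1) =
          (if e ∈ S then (if ω e = true then c else 1) else 1) := by
        intro e; by_cases h1 : e ∈ S <;> by_cases h2 : ω e = true <;> simp [h1, h2]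
      simp_rw [this]
      rw [Fintype.prod_ite_mem, Finset.prod_ite, Finset.prod_const, Finset.prod_const,
        one_pow, mul_one]
    calc ∑ ω : Sym2 (Fin n) → Bool, c ^ X ω * μ {ω}
        = ∑ ω : Sym2 (Fin n) → Bool, ∏ e : Sym2 (Fin n),
            ((if e ∈ S ∧ ω e = true then c else 1) * (if ω e then p else 1 - p)) := by
          refine Finset.sum_congr rfl fun ω _ => ?_
          rw [hpow, gnp_singleton, ← Finset.prod_mul_distrib]
      _ = ∏ e : Sym2 (Fin n), ∑ b : Bool,
            ((if e ∈ S ∧ b = true then c else 1) * (if b then p else 1 - p)) := by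
          rw [Fintype.prod_sum (fun e b => (if e ∈ S ∧ b = true then c else 1) *
            (if b then p else 1 - p))]
      _ = ∏ e : Sym2 (Fin n), (if e ∈ S then c * p + (1 - p) else 1) := by
          refine Finset.prod_congr rfl fun e _ => ?_
          rw [Fintype.sum_bool]
          by_cases h : e ∈ S
          · simp [h]
          · simp only [h, false_and, if_false, if_true, one_mul]
            exact add_tsub_cancel_of_le hp
      _ = (c * p + (1 - p)) ^ S.card := by
          rw [Fintype.prod_ite_mem, Finset.prod_const]
  -- Markov step
  have markov : c ^ θ * μ E ≤ ∑ ω : Sym2 (Fin n) → Bool, c ^ X ω * μ {ω} := by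
    rw [hμ, gnp_apply hp E, Finset.mul_sum]
    refine Finset.sum_le_sum fun ω _ => ?_
    by_cases hω : ω ∈ E
    · rw [Set.indicator_of_mem hω]
      refine mul_le_mul_left ?_ _
      rw [← ENNReal.rpow_natCast c (X ω)]
      exact ENNReal.rpow_le_rpow_of_exponent_ge hc1 (le_of_lt hω)
    · rw [Set.indicator_of_notMem hω, mul_zero]
      exact zero_le
  rw [ENNReal.le_div_iff_mul_le (Or.inl hcθ0) (Or.inl hcθtop), mul_comm]
  exact markov.trans key.le


lemma edgesBetween_comm {V : Type*} (G : SimpleGraph V) (A B : Set V) :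
    edgesBetween G A B = edgesBetween G B A := by
  unfold edgesBetween
  congr 1
  ext e
  simp only [Set.mem_setOf_eq, Set.mem_sep_iff]
  refine and_congr_right fun _ => ?_
  constructor
  · rintro ⟨a, ha, b, hb, rfl⟩; exact ⟨b, hb, a, ha, Sym2.eq_swap⟩
  · rintro ⟨b, hb, a, ha, rfl⟩; exact ⟨a, ha, b, hb, Sym2.eq_swap⟩

variable {n : ℕ}

/-- The set of potential cross edges between `F` and its complement. -/
def crossPairs (F : Finset (Fin n)) : Finset (Sym2 (Fin n)) :=
  (F ×ˢ Fᶜ).image fun ab => s(ab.1, ab.2)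

lemma mem_crossPairs {F : Finset (Fin n)} {e : Sym2 (Fin n)} :
    e ∈ crossPairs F ↔ ∃ a ∈ F, ∃ b ∈ Fᶜ, e = s(a, b) := by
  simp only [crossPairs, Finset.mem_image, Finset.mem_product, Prod.exists]
  constructor
  · rintro ⟨a, b, ⟨ha, hb⟩, rfl⟩; exact ⟨a, ha, b, hb, rfl⟩
  · rintro ⟨a, ha, b, hb, rfl⟩; exact ⟨a, b, ⟨ha, hb⟩, rfl⟩

lemma card_crossPairs (F : Finset (Fin n)) :
    (crossPairs F).card = F.card * (n - F.card) := by
  rw [crossPairs, Finset.card_image_of_injOn, Finset.card_product, Finset.card_compl,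
    Fintype.card_fin]
  rintro ⟨a, b⟩ hab ⟨a', b'⟩ hab' h
  simp only [Finset.mem_coe, Finset.mem_product, Finset.mem_compl] at hab hab'
  rcases Sym2.eq_iff.1 h with ⟨rfl, rfl⟩ | ⟨rfl, rfl⟩
  · rfl
  · exact absurd hab.1 hab'.2

lemma edgesBetween_eq_card {F : Finset (Fin n)} (ω : Sym2 (Fin n) → Bool) :
    edgesBetween (graphOf ω) ↑F (↑F : Set (Fin n))ᶜ =
      ((crossPairs F).filter fun e => ω e = true).card := by
  rw [edgesBetween, ← Set.ncard_coe_finset]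
  congr 1
  ext e
  simp only [Finset.coe_filter, Set.mem_setOf_eq, graphOf, SimpleGraph.edgeSet_fromEdgeSet,
    Set.mem_diff, Set.mem_setOf_eq, mem_crossPairs]
  constructor
  · rintro ⟨⟨he, -⟩, a, ha, b, hb, rfl⟩
    exact ⟨⟨a, by simpa using ha, b, by simpa using hb, rfl⟩, he⟩
  · rintro ⟨⟨a, ha, b, hb, rfl⟩, he⟩
    rw [Finset.mem_compl] at hb
    refine ⟨⟨he, ?_⟩, a, by simpa using ha, b, by simp [hb], rfl⟩
    simp only [Sym2.mem_diagSet, Sym2.mk_isDiag_iff]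
    rintro rfl; exact hb ha


lemma bad_reduction {n : ℕ} {pr : ℝ} {a : ℝ} (ω : Sym2 (Fin n) → Bool)
    (h : ¬ ∀ U : Set (Fin n), (edgesBetween (graphOf ω) U Uᶜ : ℝ) ≥
      (1 - a) * U.ncard * ((n : ℝ) - U.ncard) * pr) :
    ∃ F : Finset (Fin n), 1 ≤ F.card ∧ 2 * F.card ≤ n ∧
      ((((crossPairs F).filter fun e => ω e = true).card : ℝ) <
        (1 - a) * F.card * ((n : ℝ) - F.card) * pr) := by
  push_neg at h
  obtain ⟨U, hU⟩ := h
  set u := U.ncard with hu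
  have hfin : U.Finite := U.toFinite
  have huv : u + Uᶜ.ncard = n := by
    rw [hu, Set.ncard_add_ncard_compl]
    simp [Nat.card_eq_fintype_card]
  have hun : u ≤ n := le_of_add_le_left huv.le
  have hRHSpos : (0:ℝ) < (1 - a) * u * ((n : ℝ) - u) * pr :=
    lt_of_le_of_lt (Nat.cast_nonneg _) hU
  have hu1 : 1 ≤ u := by
    by_contra hcon
    push_neg at hcon
    interval_cases u
    simp at hRHSpos
  have hunlt : u < n := by
    by_contra hcon
    push_neg at hcon
    have : u = n := le_antisymm hun hcon
    rw [this] at hRHSpos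
    simp at hRHSpos
  by_cases hsmall : 2 * u ≤ n
  · refine ⟨hfin.toFinset, ?_, ?_, ?_⟩
    · rwa [← Set.ncard_eq_toFinset_card U hfin]
    · rwa [← Set.ncard_eq_toFinset_card U hfin]
    · rw [← edgesBetween_eq_card ω, ← Set.ncard_eq_toFinset_card U hfin,
        Set.Finite.coe_toFinset]
      exact hU
  · have hfin' : Uᶜ.Finite := Uᶜ.toFinite
    set v := Uᶜ.ncard with hv
    have hvn : v = n - u := by omega
    refine ⟨hfin'.toFinset, ?_, ?_, ?_⟩
    · rw [← Set.ncard_eq_toFinset_card _ hfin', ← hv]; omega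
    · rw [← Set.ncard_eq_toFinset_card _ hfin', ← hv]; omega
    · rw [← edgesBetween_eq_card ω, ← Set.ncard_eq_toFinset_card _ hfin',
        Set.Finite.coe_toFinset, ← hv]
      have h1 : edgesBetween (graphOf ω) Uᶜ Uᶜᶜ = edgesBetween (graphOf ω) U Uᶜ := by
        rw [edgesBetween_comm, compl_compl]
      rw [h1]
      have hcast : ((v : ℝ)) = (n : ℝ) - u := by
        rw [hvn]; push_cast [Nat.cast_sub hun]; ring
      have hcast2 : ((n : ℝ) - v) = (u : ℝ) := by rw [hcast]; ring
      rw [hcast2, hcast]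
      calc (edgesBetween (graphOf ω) U Uᶜ : ℝ) < (1 - a) * u * ((n:ℝ) - u) * pr := hU
        _ = (1 - a) * ((n:ℝ) - u) * u * pr := by ring

lemma exponent_bound {n u : ℕ} {pr L a ε m : ℝ} (hn : 3 ≤ n)
    (hL : L = Real.log n) (hpr : L / n ≤ pr) (hε : 0 < ε)
    (ha : Real.sqrt (4 / (↑n * pr / L)) + ε ≤ a) (ha1 : a < 1)
    (hu1 : 1 ≤ u) (hu2 : 2 * u ≤ n) (hm : m = (u : ℝ) * ((n : ℝ) - u)) :
    (1 + ε ^ 2 / 4) * u * L ≤ a ^ 2 * m * pr / 2 := by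
  have hn0 : (0:ℝ) < n := by positivity
  have hL1 : 1 ≤ L := by
    rw [hL, Real.le_log_iff_exp_le hn0]
    calc Real.exp 1 ≤ 2.7182818286 := Real.exp_one_lt_d9.le
      _ ≤ (3:ℝ) := by norm_num
      _ ≤ n := by exact_mod_cast hn
  have hL0 : (0:ℝ) < L := by linarith
  have hpr0 : (0:ℝ) < pr := lt_of_lt_of_le (by positivity) hpr
  have hx : 4 / (↑n * pr / L) = 4 * L / (↑n * pr) := by
    field_simp
  have hxnn : (0:ℝ) ≤ 4 * L / (↑n * pr) := by positivity
  have hsq : Real.sqrt (4 / (↑n * pr / L)) ^ 2 = 4 * L / (↑n * pr) := by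
    rw [hx, Real.sq_sqrt hxnn]
  have ha0 : 0 ≤ Real.sqrt (4 / (↑n * pr / L)) := Real.sqrt_nonneg _
  have ha2 : 4 * L / (↑n * pr) + ε ^ 2 ≤ a ^ 2 := by
    nlinarith [ha, hsq, ha0, hε]
  -- m ≥ u * n / 2
  have hmu : (u : ℝ) * n / 2 ≤ m := by
    rw [hm]
    have h1 : (n:ℝ) / 2 ≤ (n:ℝ) - u := by
      have : (2:ℝ) * u ≤ n := by exact_mod_cast hu2
      linarith
    have hu0 : (0:ℝ) ≤ u := Nat.cast_nonneg _
    nlinarith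
  have hm0 : (0:ℝ) ≤ m := le_trans (by positivity) hmu
  have step1 : (4 * L / (↑n * pr) + ε ^ 2) * m * pr / 2 ≤ a ^ 2 * m * pr / 2 := by
    have := mul_le_mul_of_nonneg_right ha2 (show (0:ℝ) ≤ m * pr / 2 by positivity)
    calc (4 * L / (↑n * pr) + ε ^ 2) * m * pr / 2
        = (4 * L / (↑n * pr) + ε ^ 2) * (m * pr / 2) := by ring
      _ ≤ a ^ 2 * (m * pr / 2) := this
      _ = a ^ 2 * m * pr / 2 := by ring
  have expand : (4 * L / (↑n * pr) + ε ^ 2) * m * pr / 2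
      = 2 * L * m / n + ε ^ 2 * m * pr / 2 := by
    field_simp
    ring
  have t1 : (u : ℝ) * L ≤ 2 * L * m / n := by
    rw [le_div_iff₀ hn0]
    nlinarith
  have t2 : ε ^ 2 * (u : ℝ) * L / 4 ≤ ε ^ 2 * m * pr / 2 := by
    have hmp : (u:ℝ) * L / 2 ≤ m * pr := by
      calc (u:ℝ) * L / 2 = ((u:ℝ) * n / 2) * (L / n) := by field_simp
        _ ≤ m * pr := by
          apply mul_le_mul hmu hpr (by positivity) hm0
    nlinarith [sq_nonneg ε]
  calc (1 + ε ^ 2 / 4) * u * L = (u:ℝ) * L + ε ^ 2 * u * L / 4 := by ring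
    _ ≤ 2 * L * m / n + ε ^ 2 * m * pr / 2 := add_le_add t1 t2
    _ = (4 * L / (↑n * pr) + ε ^ 2) * m * pr / 2 := expand.symm
    _ ≤ a ^ 2 * m * pr / 2 := step1


lemma sum_bad_bound {n : ℕ} {δ L : ℝ} (hn : 1 ≤ n) (hL : L = Real.log n)
    (hhalf : Real.exp (-(δ * L)) ≤ 1 / 2) :
    ∑ F ∈ Finset.univ.filter (fun F : Finset (Fin n) => 1 ≤ F.card ∧ 2 * F.card ≤ n),
      Real.exp (-((1 + δ) * F.card * L)) ≤ 2 * Real.exp (-(δ * L)) := by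
  classical
  set g : ℕ → ℝ := fun u => Real.exp (-((1 + δ) * u * L)) with hg
  set A := Finset.univ.filter (fun F : Finset (Fin n) => 1 ≤ F.card ∧ 2 * F.card ≤ n) with hA
  have hmaps : ∀ F ∈ A, F.card ∈ Finset.Icc 1 n := by
    intro F hF
    rw [hA, Finset.mem_filter] at hF
    have := Finset.card_le_univ F
    simp only [Finset.card_univ, Fintype.card_fin] at this
    exact Finset.mem_Icc.2 ⟨hF.2.1, this⟩
  have hfiber : ∑ F ∈ A, g F.card =
      ∑ u ∈ Finset.Icc 1 n, ∑ F ∈ A.filter (fun F => F.card = u), g F.card :=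
    (Finset.sum_fiberwise_of_maps_to hmaps _).symm
  have hn0 : (0:ℝ) < n := by positivity
  have hexp : ((n:ℝ)) = Real.exp L := by rw [hL, Real.exp_log hn0]
  set r : ℝ := Real.exp (-(δ * L)) with hr
  have hr0 : 0 < r := Real.exp_pos _
  have step : ∀ u ∈ Finset.Icc 1 n,
      ∑ F ∈ A.filter (fun F => F.card = u), g F.card ≤ r * (1/2) ^ (u - 1) := by
    intro u hu
    rw [Finset.mem_Icc] at hu
    have hcard : (A.filter (fun F => F.card = u)).card ≤ n.choose u := by
      have hsub : A.filter (fun F => F.card = u) ⊆ Finset.powersetCard u Finset.univ :=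
        fun F hF => Finset.mem_powersetCard_univ.2 (Finset.mem_filter.1 hF).2
      calc (A.filter (fun F => F.card = u)).card ≤ _ := Finset.card_le_card hsub
        _ = n.choose u := by rw [Finset.card_powersetCard, Finset.card_univ, Fintype.card_fin]
    have hsum : ∑ F ∈ A.filter (fun F => F.card = u), g F.card =
        (A.filter (fun F => F.card = u)).card * g u := by
      rw [Finset.sum_congr rfl (fun F hF => by rw [(Finset.mem_filter.1 hF).2]),
        Finset.sum_const, nsmul_eq_mul]
    rw [hsum]
    have hgpos : 0 < g u := Real.exp_pos _
    have hchoose : ((n.choose u : ℕ) : ℝ) ≤ (n:ℝ) ^ u := by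
      calc ((n.choose u : ℕ) : ℝ) ≤ (n:ℝ) ^ u / (u.factorial : ℝ) := Nat.choose_le_pow_div u n
        _ ≤ (n:ℝ) ^ u := by
          apply div_le_self (by positivity)
          exact_mod_cast Nat.one_le_iff_ne_zero.2 (Nat.factorial_ne_zero u)
    have h1 : ((A.filter (fun F => F.card = u)).card : ℝ) * g u ≤ (n:ℝ) ^ u * g u := by
      apply mul_le_mul_of_nonneg_right _ hgpos.le
      exact le_trans (by exact_mod_cast hcard) hchoose
    refine h1.trans ?_
    have h2 : (n:ℝ) ^ u * g u = r ^ u := by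
      rw [hexp, hg, hr, ← Real.exp_nat_mul, ← Real.exp_nat_mul, ← Real.exp_add]
      congr 1
      ring
    rw [h2]
    have h3 : r ^ u = r ^ (u - 1) * r := by
      rw [← pow_succ]
      congr 1
      omega
    rw [h3, mul_comm (r ^ (u-1)) r]
    apply mul_le_mul_of_nonneg_left _ hr0.le
    exact pow_le_pow_left₀ hr0.le hhalf _
  calc ∑ F ∈ A, g F.card ≤ ∑ u ∈ Finset.Icc 1 n, r * (1/2) ^ (u - 1) := by
        rw [hfiber]; exact Finset.sum_le_sum step
    _ = ∑ i ∈ Finset.range n, r * (1/2) ^ i := by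
        have : Finset.Icc 1 n = Finset.Ico 1 (n + 1) := by
          rw [Finset.Ico_add_one_right_eq_Icc]
        rw [this, Finset.sum_Ico_eq_sum_range]
        simp only [Nat.add_sub_cancel_left, add_tsub_cancel_left]
        norm_num
    _ = r * ∑ i ∈ Finset.range n, (1/2 : ℝ) ^ i := by rw [Finset.mul_sum]
    _ ≤ r * 2 := mul_le_mul_of_nonneg_left (sum_geometric_two_le n) hr0.le
    _ = 2 * r := by ring


/-- Real-valued Chernoff bound. -/
lemma gnp_chernoff_real {n : ℕ} {p : ENNReal} (hp : p ≤ 1)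
    (S : Finset (Sym2 (Fin n))) {α : ℝ} (hα0 : 0 < α) (hα1 : α < 1) :
    gnp n p hp {ω | (((S.filter fun e => ω e = true).card : ℝ)) <
        (1 - α) * S.card * p.toReal} ≤
      ENNReal.ofReal (Real.exp (-(α ^ 2 * S.card * p.toReal / 2))) := by
  classical
  set pr := p.toReal with hpr
  have hptop : p ≠ ⊤ := ne_top_of_le_ne_top ENNReal.one_ne_top hp
  have hpr0 : 0 ≤ pr := ENNReal.toReal_nonneg
  have hpr1 : pr ≤ 1 := by
    rw [hpr, ← ENNReal.toReal_one]
    exact ENNReal.toReal_mono ENNReal.one_ne_top hp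
  have h1α : (0:ℝ) < 1 - α := by linarith
  set c : ENNReal := ENNReal.ofReal (1 - α) with hc
  have hc1 : c ≤ 1 := by
    rw [hc, ← ENNReal.ofReal_one]
    exact ENNReal.ofReal_le_ofReal (by linarith)
  have hc0 : c ≠ 0 := by
    rw [hc]; simpa using h1α
  set θ : ℝ := (1 - α) * S.card * pr with hθ
  refine (gnp_chernoff hp S c hc1 hc0 θ).trans ?_
  have hcp : c * p + (1 - p) = ENNReal.ofReal (1 - α * pr) := by
    rw [hc, ← ENNReal.ofReal_toReal hptop, ← hpr, ← ENNReal.ofReal_mul h1α.le,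
      ← ENNReal.ofReal_one, ← ENNReal.ofReal_sub _ hpr0,
      ← ENNReal.ofReal_add (by nlinarith) (by linarith)]
    ring_nf
  have hpow : (c * p + (1 - p)) ^ S.card = ENNReal.ofReal ((1 - α * pr) ^ S.card) := by
    rw [hcp, ← ENNReal.ofReal_pow (by nlinarith)]
  have hrpow : c ^ θ = ENNReal.ofReal ((1 - α) ^ θ) := by
    rw [hc, ← ENNReal.ofReal_rpow_of_pos h1α]
  rw [hpow, hrpow, ← ENNReal.ofReal_div_of_pos (Real.rpow_pos_of_pos h1α θ)]
  apply ENNReal.ofReal_le_ofReal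
  set m : ℝ := (S.card : ℝ) with hm
  have hm0 : 0 ≤ m := Nat.cast_nonneg _
  have hnum : (1 - α * pr) ^ S.card ≤ Real.exp (-(α * pr) * m) := by
    have h1 : 1 - α * pr ≤ Real.exp (-(α * pr)) := by
      have := Real.add_one_le_exp (-(α * pr)); linarith
    have h2 : (1 - α * pr) ^ S.card ≤ (Real.exp (-(α * pr))) ^ S.card :=
      pow_le_pow_left₀ (by nlinarith) h1 _
    rw [← Real.exp_nat_mul] at h2
    exact h2.trans_eq (by rw [hm]; ring_nf)
  have hden : (1 - α) ^ θ = Real.exp (θ * Real.log (1 - α)) := by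
    rw [Real.rpow_def_of_pos h1α, mul_comm]
  have hdenpos : (0:ℝ) < (1 - α) ^ θ := Real.rpow_pos_of_pos h1α θ
  calc (1 - α * pr) ^ S.card / (1 - α) ^ θ
      ≤ Real.exp (-(α * pr) * m) / (1 - α) ^ θ := by
        gcongr
    _ = Real.exp (-(α * pr) * m - θ * Real.log (1 - α)) := by
        rw [hden, ← Real.exp_sub]
    _ ≤ Real.exp (-(α ^ 2 * m * pr / 2)) := by
        apply Real.exp_le_exp.2
        have hent := sq_half_le_entropy hα0.le hα1
        rw [hθ]
        have hmpr : 0 ≤ m * pr := by positivity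
        nlinarith [mul_le_mul_of_nonneg_right hent hmpr]


instance gnp_isProbabilityMeasure (n : ℕ) (p : ENNReal) (hp : p ≤ 1) :
    IsProbabilityMeasure (gnp n p hp) :=
  inferInstanceAs (IsProbabilityMeasure (Measure.pi _))

/-- P6. Let `ε > 0`, `p ≥ (ln n)/n`, `f(n) = np/ln n` and
`α ≥ √(4/f(n)) + ε`. Then w.h.p. `G ~ G(n,p)` is such that for every vertex subset
`U`, `e(U,Uᶜ) ≥ (1-α)|U|(n-|U|)p`. -/
theorem gnp_edge_boundary (p : ℕ → ENNReal) (hp : ∀ n, p n ≤ 1)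
    (hlb : ∀ n : ℕ, ENNReal.ofReal (Real.log n / n) ≤ p n)
    (ε : ℝ) (hε : 0 < ε) (α : ℕ → ℝ)
    (hα : ∀ n : ℕ,
      α n ≥ Real.sqrt (4 / (n * (p n).toReal / Real.log n)) + ε) :
    Tendsto
      (fun n => gnp n (p n) (hp n)
        {ω | ∀ U : Set (Fin n),
          (edgesBetween (graphOf ω) U Uᶜ : ℝ) ≥
            (1 - α n) * U.ncard * ((n : ℝ) - U.ncard) * (p n).toReal})
      atTop (nhds 1) := by
  classical
  set δ : ℝ := ε ^ 2 / 4 with hδ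
  have hδ0 : 0 < δ := by positivity
  set A : ∀ n : ℕ, Set (Sym2 (Fin n) → Bool) := fun n =>
    {ω | ∀ U : Set (Fin n),
      (edgesBetween (graphOf ω) U Uᶜ : ℝ) ≥
        (1 - α n) * U.ncard * ((n : ℝ) - U.ncard) * (p n).toReal} with hAdef
  set bnd : ℕ → ENNReal := fun n => ENNReal.ofReal (2 * Real.exp (-(δ * Real.log n))) with hbnd
  -- real sequence tends to 0
  have hlogtop : Tendsto (fun n : ℕ => Real.log n) atTop atTop :=
    Real.tendsto_log_atTop.comp tendsto_natCast_atTop_atTop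
  have hexptend : Tendsto (fun n : ℕ => Real.exp (-(δ * Real.log n))) atTop (nhds 0) := by
    apply Real.tendsto_exp_atBot.comp
    apply Filter.tendsto_neg_atBot_iff.2
    exact hlogtop.const_mul_atTop hδ0
  have hrtend : Tendsto (fun n : ℕ => 2 * Real.exp (-(δ * Real.log n))) atTop (nhds 0) := by
    have := hexptend.const_mul (2:ℝ)
    simpa using this
  have hbndtend : Tendsto bnd atTop (nhds 0) := by
    rw [hbnd, show (0:ENNReal) = ENNReal.ofReal 0 by simp]
    exact ENNReal.tendsto_ofReal hrtend
  -- eventual bound on the complement measure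
  have key : ∀ᶠ n in atTop, gnp n (p n) (hp n) (A n)ᶜ ≤ bnd n := by
    have hev1 : ∀ᶠ n : ℕ in atTop, 3 ≤ n := eventually_ge_atTop 3
    have hev2 : ∀ᶠ n : ℕ in atTop, Real.exp (-(δ * Real.log n)) ≤ 1 / 2 :=
      hexptend.eventually (eventually_le_nhds (by norm_num))
    filter_upwards [hev1, hev2] with n hn3 hnhalf
    set pr : ℝ := (p n).toReal with hpr
    set L : ℝ := Real.log n with hL
    have hn0 : (0:ℝ) < n := by positivity
    have hL0 : 0 ≤ L := Real.log_nonneg (by exact_mod_cast by omega)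
    have hptop : p n ≠ ⊤ := ne_top_of_le_ne_top ENNReal.one_ne_top (hp n)
    have hprL : L / n ≤ pr := by
      have h1 := ENNReal.toReal_mono hptop (hlb n)
      rwa [ENNReal.toReal_ofReal (by positivity)] at h1
    have hαε : Real.sqrt (4 / (↑n * pr / L)) + ε ≤ α n := hα n
    have hα0 : 0 < α n := lt_of_lt_of_le (by positivity : (0:ℝ) < _ + ε) hαε
    by_cases hα1 : α n < 1
    · -- union bound over small sets
      set 𝒜 : Finset (Finset (Fin n)) :=
        Finset.univ.filter (fun F => 1 ≤ F.card ∧ 2 * F.card ≤ n) with h𝒜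
      set E : Finset (Fin n) → Set (Sym2 (Fin n) → Bool) := fun F =>
        {ω | ((((crossPairs F).filter fun e => ω e = true).card : ℝ) <
          (1 - α n) * F.card * ((n : ℝ) - F.card) * pr)} with hE
      have hsub : (A n)ᶜ ⊆ ⋃ F ∈ 𝒜, E F := by
        intro ω hω
        obtain ⟨F, hF1, hF2, hF3⟩ := bad_reduction ω hω
        exact Set.mem_biUnion (Finset.mem_filter.2 ⟨Finset.mem_univ F, hF1, hF2⟩) hF3
      refine le_trans (measure_mono hsub) ?_
      refine le_trans (measure_biUnion_finset_le _ _) ?_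
      have hterm : ∀ F ∈ 𝒜, gnp n (p n) (hp n) (E F) ≤
          ENNReal.ofReal (Real.exp (-((1 + δ) * F.card * L))) := by
        intro F hF
        rw [h𝒜, Finset.mem_filter] at hF
        obtain ⟨-, hF1, hF2⟩ := hF
        have hFn : F.card ≤ n := by omega
        have hcastm : (((crossPairs F).card : ℕ) : ℝ) = F.card * ((n:ℝ) - F.card) := by
          rw [card_crossPairs]
          push_cast [Nat.cast_sub hFn]
          ring
        have hval : (1 - α n) * ((crossPairs F).card : ℝ) * pr =
            (1 - α n) * F.card * ((n:ℝ) - F.card) * pr := by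
          rw [hcastm]; ring
        have hch := gnp_chernoff_real (hp n) (crossPairs F) hα0 hα1
        rw [hval] at hch
        refine le_trans hch ?_
        apply ENNReal.ofReal_le_ofReal
        apply Real.exp_le_exp.2
        have := exponent_bound hn3 hL hprL hε hαε hα1 hF1 hF2 hcastm
        rw [← hδ] at this
        linarith
      refine le_trans (Finset.sum_le_sum hterm) ?_
      rw [← ENNReal.ofReal_sum_of_nonneg (fun F _ => (Real.exp_pos _).le)]
      apply ENNReal.ofReal_le_ofReal
      rw [hδ] at *
      exact sum_bad_bound (by omega) hL hnhalf
    · -- α n ≥ 1 : the event holds surely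
      push_neg at hα1
      have hAall : (A n)ᶜ = ∅ := by
        rw [Set.compl_empty_iff]
        ext ω
        simp only [hAdef, Set.mem_setOf_eq, Set.mem_univ, iff_true]
        intro U
        have hu0 : (0:ℝ) ≤ U.ncard := Nat.cast_nonneg _
        have hun : (U.ncard : ℝ) ≤ n := by
          have := Set.ncard_le_ncard (Set.subset_univ U) Set.finite_univ
          rw [Set.ncard_univ, Nat.card_eq_fintype_card, Fintype.card_fin] at this
          exact_mod_cast this
        have hpr0 : (0:ℝ) ≤ pr := ENNReal.toReal_nonneg
        have : (1 - α n) * U.ncard * ((n : ℝ) - U.ncard) * pr ≤ 0 := by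
          have h1 : 1 - α n ≤ 0 := by linarith
          have hX : (0:ℝ) ≤ U.ncard * ((n:ℝ) - U.ncard) * pr :=
            mul_nonneg (mul_nonneg hu0 (by linarith)) hpr0
          nlinarith [mul_nonpos_of_nonpos_of_nonneg h1 hX]
        calc (1 - α n) * U.ncard * ((n : ℝ) - U.ncard) * (p n).toReal ≤ 0 := this
          _ ≤ (edgesBetween (graphOf ω) U Uᶜ : ℝ) := Nat.cast_nonneg _
      rw [hAall]
      simp
  -- conclude by squeezing
  have hprob : ∀ n, gnp n (p n) (hp n) (A n) = 1 - gnp n (p n) (hp n) (A n)ᶜ := by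
    intro n
    have hAmeas : MeasurableSet (A n) := (Set.to_countable _).measurableSet
    rw [prob_compl_eq_one_sub hAmeas,
      ENNReal.sub_sub_cancel ENNReal.one_ne_top prob_le_one]
  have hlow : ∀ᶠ n in atTop, 1 - bnd n ≤ gnp n (p n) (hp n) (A n) := by
    filter_upwards [key] with n hk
    rw [hprob n]
    exact tsub_le_tsub_left hk 1
  have hlowtend : Tendsto (fun n => 1 - bnd n) atTop (nhds 1) := by
    have hcont := (ENNReal.continuous_sub_left ENNReal.one_ne_top).continuousAt
      (x := (0 : ENNReal))
    have := hcont.tendsto.comp hbndtend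
    simpa [Function.comp_def] using this
  refine tendsto_of_tendsto_of_tendsto_of_le_of_le' hlowtend tendsto_const_nhds hlow ?_
  exact Filter.Eventually.of_forall fun n => prob_le_one
end
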